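/- arXiv:1101.1998 — 14 statements merged into one kernel-verified Lean document; each statement's English description precedes it below -/
import Mathlib

section
/- Let A be a Z×Z-graded domain over a field k generated by x_1, x_2, x_3 where deg x_1 = deg x_2 = (1,0) and deg x_3 = (0,1). Suppose A has two defining relations of bidegree (1,1). Then x_3 is a normal element of A. -/
noncomputable section

/-- An element `y` of a ring is *normal* if `yA = Ay`. -/
def IsNormalElem {A : Type*} [Mul A] (y : A) : Prop :=
  (∀ a : A, ∃ b : A, y * a = b * y) ∧ (∀ a : A, ∃ b : A, a * y = y * b)

open FreeAlgebra

private lemma row_dep {k : Type} [Field k] {a b c d : k} (h : a * d - b * c = 0) :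
    ∃ lam mu : k, (lam ≠ 0 ∨ mu ≠ 0) ∧ lam * a + mu * c = 0 ∧ lam * b + mu * d = 0 := by
  by_cases hc : c = 0 ∧ d = 0
  · exact ⟨0, 1, Or.inr one_ne_zero, by simp [hc.1], by simp [hc.2]⟩
  · rcases not_and_or.mp hc with hc | hd
    · exact ⟨c, -a, Or.inl hc, by ring, by linear_combination -h⟩
    · exact ⟨d, -b, Or.inl hd, by linear_combination h, by ring⟩

private lemma mem_span4 {k M : Type*} [Field k] [AddCommGroup M] [Module k M]
    {m₁ m₂ m₃ m₄ x : M} (h : x ∈ Submodule.span k {m₁, m₂, m₃, m₄}) :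
    ∃ a b c d : k, x = a • m₁ + b • m₂ + c • m₃ + d • m₄ := by
  rw [Submodule.mem_span_insert] at h
  obtain ⟨a, z, hz, rfl⟩ := h
  rw [Submodule.mem_span_insert] at hz
  obtain ⟨b, z2, hz2, rfl⟩ := hz
  rw [Submodule.mem_span_insert] at hz2
  obtain ⟨c, z3, hz3, rfl⟩ := hz2
  rw [Submodule.mem_span_singleton] at hz3
  obtain ⟨d, rfl⟩ := hz3
  exact ⟨a, b, c, d, by abel⟩

/-- let `A` be a `ℤ×ℤ`-graded domain generated by `x₁, x₂` of bidegree `(1,0)`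
and `x₃` of bidegree `(0,1)` (with `x₁, x₂` linearly independent over `k`).  If `A` has two
(linearly independent) defining relations of bidegree `(1,1)` — i.e. two linearly
independent elements of the span of `x₃x₁, x₃x₂, x₁x₃, x₂x₃` in the free algebra which map
to zero in `A` — then `x₃` is a normal element of `A`. -/
theorem normal_from_two_relations_of_bidegree_one_one
    (k : Type) [Field k] [IsAlgClosed k] [CharZero k]
    (A : Type) [Ring A] [IsDomain A] [Algebra k A]
    (𝒜 : ℤ × ℤ → Submodule k A) [GradedAlgebra 𝒜]
    (x₁ x₂ x₃ : A)
    (h1 : x₁ ∈ 𝒜 (1, 0)) (h2 : x₂ ∈ 𝒜 (1, 0)) (h3 : x₃ ∈ 𝒜 (0, 1))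
    (hgen : Algebra.adjoin k ({x₁, x₂, x₃} : Set A) = ⊤)
    (hind : LinearIndependent k ![x₁, x₂])
    (π : FreeAlgebra k (Fin 3) →ₐ[k] A)
    (hπ0 : π (FreeAlgebra.ι k 0) = x₁) (hπ1 : π (FreeAlgebra.ι k 1) = x₂)
    (hπ2 : π (FreeAlgebra.ι k 2) = x₃)
    (r₁ r₂ : FreeAlgebra k (Fin 3))
    (hr₁ : r₁ ∈ Submodule.span k
      {FreeAlgebra.ι k (2 : Fin 3) * FreeAlgebra.ι k 0,
       FreeAlgebra.ι k (2 : Fin 3) * FreeAlgebra.ι k 1,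
       FreeAlgebra.ι k (0 : Fin 3) * FreeAlgebra.ι k 2,
       FreeAlgebra.ι k (1 : Fin 3) * FreeAlgebra.ι k 2})
    (hr₂ : r₂ ∈ Submodule.span k
      {FreeAlgebra.ι k (2 : Fin 3) * FreeAlgebra.ι k 0,
       FreeAlgebra.ι k (2 : Fin 3) * FreeAlgebra.ι k 1,
       FreeAlgebra.ι k (0 : Fin 3) * FreeAlgebra.ι k 2,
       FreeAlgebra.ι k (1 : Fin 3) * FreeAlgebra.ι k 2})
    (hrind : LinearIndependent k ![r₁, r₂])
    (hrel1 : π r₁ = 0) (hrel2 : π r₂ = 0) :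
    IsNormalElem x₃ := by
  by_cases hx3 : x₃ = 0
  · exact ⟨fun a => ⟨0, by simp [hx3]⟩, fun a => ⟨0, by simp [hx3]⟩⟩
  obtain ⟨ca1, cb1, cc1, cd1, hrep1⟩ := mem_span4 hr₁
  obtain ⟨ca2, cb2, cc2, cd2, hrep2⟩ := mem_span4 hr₂
  have E₁ : ca1 • (x₃*x₁) + cb1 • (x₃*x₂) + cc1 • (x₁*x₃) + cd1 • (x₂*x₃) = 0 := by
    rw [← hrel1, hrep1]
    simp [map_add, map_smul, map_mul, hπ0, hπ1, hπ2]
  have E₂ : ca2 • (x₃*x₁) + cb2 • (x₃*x₂) + cc2 • (x₁*x₃) + cd2 • (x₂*x₃) = 0 := by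
    rw [← hrel2, hrep2]
    simp [map_add, map_smul, map_mul, hπ0, hπ1, hπ2]
  have hpairx : ∀ e f : k, e • x₁ + f • x₂ = 0 → e = 0 ∧ f = 0 :=
    fun e f h => LinearIndependent.pair_iff.mp hind e f h
  have hker : ∀ lam mu : k, lam*ca1 + mu*ca2 = 0 → lam*cb1 + mu*cb2 = 0 →
      lam*cc1 + mu*cc2 = 0 → lam*cd1 + mu*cd2 = 0 → lam = 0 ∧ mu = 0 := by
    intro lam mu g1 g2 g3 g4
    refine LinearIndependent.pair_iff.mp hrind lam mu ?_
    have : lam • r₁ + mu • r₂ =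
        (lam*ca1 + mu*ca2) • (FreeAlgebra.ι k (2 : Fin 3) * FreeAlgebra.ι k 0)
        + (lam*cb1 + mu*cb2) • (FreeAlgebra.ι k (2 : Fin 3) * FreeAlgebra.ι k 1)
        + (lam*cc1 + mu*cc2) • (FreeAlgebra.ι k (0 : Fin 3) * FreeAlgebra.ι k 2)
        + (lam*cd1 + mu*cd2) • (FreeAlgebra.ι k (1 : Fin 3) * FreeAlgebra.ι k 2) := by
      rw [hrep1, hrep2]; module
    rw [this, g1, g2, g3, g4]; simp
  have hdetL : ca1*cb2 - cb1*ca2 ≠ 0 := by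
    intro h0
    obtain ⟨lam, mu, hne, hA, hB⟩ := row_dep h0
    have hc0 : (lam*ca1 + mu*ca2) • (x₃*x₁) + (lam*cb1 + mu*cb2) • (x₃*x₂)
        + (lam*cc1 + mu*cc2) • (x₁*x₃) + (lam*cd1 + mu*cd2) • (x₂*x₃) = 0 := by
      linear_combination (norm := module) lam • E₁ + mu • E₂
    rw [hA, hB] at hc0
    simp only [zero_smul, zero_add] at hc0
    have hc1 : ((lam*cc1 + mu*cc2) • x₁ + (lam*cd1 + mu*cd2) • x₂) * x₃ = 0 := by
      rw [add_mul, smul_mul_assoc, smul_mul_assoc]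
      exact hc0
    rcases mul_eq_zero.mp hc1 with h | h
    · obtain ⟨g3, g4⟩ := hpairx _ _ h
      obtain ⟨rfl, rfl⟩ := hker lam mu hA hB g3 g4
      rcases hne with h' | h' <;> exact h' rfl
    · exact hx3 h
  have Hp : ∃ al be : k, x₃*x₁ = al • (x₁*x₃) + be • (x₂*x₃) := by
    refine ⟨(ca1*cb2 - cb1*ca2)⁻¹ * (cb1*cc2 - cb2*cc1),
            (ca1*cb2 - cb1*ca2)⁻¹ * (cb1*cd2 - cb2*cd1), ?_⟩
    apply smul_right_injective A hdetL
    show (ca1*cb2 - cb1*ca2) • (x₃*x₁) = (ca1*cb2 - cb1*ca2) • _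
    rw [smul_add, smul_smul, smul_smul, mul_inv_cancel_left₀ hdetL, mul_inv_cancel_left₀ hdetL]
    linear_combination (norm := module) cb2 • E₁ - cb1 • E₂
  have Hq : ∃ ga de : k, x₃*x₂ = ga • (x₁*x₃) + de • (x₂*x₃) := by
    refine ⟨(ca1*cb2 - cb1*ca2)⁻¹ * (ca2*cc1 - ca1*cc2),
            (ca1*cb2 - cb1*ca2)⁻¹ * (ca2*cd1 - ca1*cd2), ?_⟩
    apply smul_right_injective A hdetL
    show (ca1*cb2 - cb1*ca2) • (x₃*x₂) = (ca1*cb2 - cb1*ca2) • _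
    rw [smul_add, smul_smul, smul_smul, mul_inv_cancel_left₀ hdetL, mul_inv_cancel_left₀ hdetL]
    linear_combination (norm := module) ca1 • E₂ - ca2 • E₁
  obtain ⟨al, be, hp⟩ := Hp
  obtain ⟨ga, de, hq⟩ := Hq
  have key : ∀ u v : k, x₃ * (u • x₁ + v • x₂) =
      (u*al + v*ga) • (x₁*x₃) + (u*be + v*de) • (x₂*x₃) := by
    intro u v
    rw [mul_add, mul_smul_comm, mul_smul_comm, hp, hq]
    module
  have hdetM : al*de - be*ga ≠ 0 := by
    intro h0
    obtain ⟨lam, mu, hne, hA, hB⟩ := row_dep h0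
    have hz : x₃ * (lam • x₁ + mu • x₂) = 0 := by
      rw [key, hA, hB]; simp
    rcases mul_eq_zero.mp hz with h | h
    · exact hx3 h
    · obtain ⟨rfl, rfl⟩ := hpairx _ _ h
      rcases hne with h' | h' <;> exact h' rfl
  have hr1' : x₁ * x₃ = x₃ * (((al*de - be*ga)⁻¹ * de) • x₁ + ((al*de - be*ga)⁻¹ * (-be)) • x₂) := by
    rw [key]
    rw [show ((al*de - be*ga)⁻¹ * de)*al + ((al*de - be*ga)⁻¹ * (-be))*ga
        = (al*de - be*ga)⁻¹ * (al*de - be*ga) by ring, inv_mul_cancel₀ hdetM]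
    rw [show ((al*de - be*ga)⁻¹ * de)*be + ((al*de - be*ga)⁻¹ * (-be))*de = 0 by ring]
    simp
  have hr2' : x₂ * x₃ = x₃ * (((al*de - be*ga)⁻¹ * (-ga)) • x₁ + ((al*de - be*ga)⁻¹ * al) • x₂) := by
    rw [key]
    rw [show ((al*de - be*ga)⁻¹ * (-ga))*al + ((al*de - be*ga)⁻¹ * al)*ga = 0 by ring]
    rw [show ((al*de - be*ga)⁻¹ * (-ga))*be + ((al*de - be*ga)⁻¹ * al)*de
        = (al*de - be*ga)⁻¹ * (al*de - be*ga) by ring, inv_mul_cancel₀ hdetM]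
    simp
  have hpx1 : x₃ * x₁ = (al • x₁ + be • x₂) * x₃ := by
    rw [add_mul, smul_mul_assoc, smul_mul_assoc]; exact hp
  have hpx2 : x₃ * x₂ = (ga • x₁ + de • x₂) * x₃ := by
    rw [add_mul, smul_mul_assoc, smul_mul_assoc]; exact hq
  constructor
  · -- left normality: x₃ * a ∈ A * x₃
    let S : Subalgebra k A :=
      { carrier := {a | ∃ b, x₃ * a = b * x₃}
        mul_mem' := by
          rintro a a' ⟨u, hu⟩ ⟨v, hv⟩
          exact ⟨u * v, by rw [← mul_assoc, hu, mul_assoc, hv, ← mul_assoc]⟩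
        one_mem' := ⟨1, by rw [mul_one, one_mul]⟩
        add_mem' := by
          rintro a a' ⟨u, hu⟩ ⟨v, hv⟩
          exact ⟨u + v, by rw [mul_add, hu, hv, add_mul]⟩
        zero_mem' := ⟨0, by rw [mul_zero, zero_mul]⟩
        algebraMap_mem' := fun r => ⟨algebraMap k A r, (Algebra.commutes r x₃).symm⟩ }
    have hle : Algebra.adjoin k ({x₁, x₂, x₃} : Set A) ≤ S := by
      apply Algebra.adjoin_le
      intro y hy
      rcases hy with h | h | h
      · exact h ▸ ⟨al • x₁ + be • x₂, hpx1⟩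
      · exact h ▸ ⟨ga • x₁ + de • x₂, hpx2⟩
      · exact h ▸ ⟨x₃, rfl⟩
    intro a
    exact hle (hgen ▸ Algebra.mem_top : a ∈ Algebra.adjoin k ({x₁, x₂, x₃} : Set A))
  · -- right normality: a * x₃ ∈ x₃ * A
    let T : Subalgebra k A :=
      { carrier := {a | ∃ b, a * x₃ = x₃ * b}
        mul_mem' := by
          rintro a a' ⟨u, hu⟩ ⟨v, hv⟩
          exact ⟨u * v, by rw [mul_assoc, hv, ← mul_assoc, hu, mul_assoc]⟩
        one_mem' := ⟨1, by rw [mul_one, one_mul]⟩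
        add_mem' := by
          rintro a a' ⟨u, hu⟩ ⟨v, hv⟩
          exact ⟨u + v, by rw [add_mul, hu, hv, mul_add]⟩
        zero_mem' := ⟨0, by rw [mul_zero, zero_mul]⟩
        algebraMap_mem' := fun r => ⟨algebraMap k A r, Algebra.commutes r x₃⟩ }
    have hle : Algebra.adjoin k ({x₁, x₂, x₃} : Set A) ≤ T := by
      apply Algebra.adjoin_le
      intro y hy
      rcases hy with h | h | h
      · exact h ▸ ⟨((al*de - be*ga)⁻¹ * de) • x₁ + ((al*de - be*ga)⁻¹ * (-be)) • x₂, hr1'⟩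
      · exact h ▸ ⟨((al*de - be*ga)⁻¹ * (-ga)) • x₁ + ((al*de - be*ga)⁻¹ * al) • x₂, hr2'⟩
      · exact h ▸ ⟨x₃, rfl⟩
    intro a
    exact hle (hgen ▸ Algebra.mem_top : a ∈ Algebra.adjoin k ({x₁, x₂, x₃} : Set A))
end
end

section
/- Let A be a Z×Z-graded algebra over k generated by x_1, x_2, x_3 (deg x_1 = deg x_2 = (1,0), deg x_3 = (0,1)), which is a domain, subject to relations x_2x_1 = p x_1x_2, x_3x_2 = a x_3x_1 + x_1x_3 + b x_2x_3, and x_3^2 x_1 = c x_1x_3^2 + d x_2x_3^2 + e x_3x_1x_3 with n = 1. If d = bc, then x_3 · (x_3x_1 - c x_2x_3 + (ac - e) x_1x_3) = 0 in A; in particular, if A is a domain and x_3x_1 - c x_2x_3 + (ac-e)x_1x_3 ≠ 0 in A, then d ≠ bc. -/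
noncomputable section

open FreeAlgebra

variable (k : Type) [Field k]

/-- Generators of the free algebra on three variables. -/
abbrev X (i : Fin 3) : FreeAlgebra k (Fin 3) := FreeAlgebra.ι k i

/-- The defining relations: `x₂x₁ = p x₁x₂`, `x₃x₂ = a x₃x₁ + x₁x₃ + b x₂x₃` (`n = 1`),
`x₃²x₁ = c x₁x₃² + d x₂x₃² + e x₃x₁x₃`, together with a fourth relation `r₄ = 0`. -/
inductive rel5 (p a b c d e : k) (r₄ : FreeAlgebra k (Fin 3)) :
    FreeAlgebra k (Fin 3) → FreeAlgebra k (Fin 3) → Prop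
  | r1 : rel5 p a b c d e r₄ (X k 1 * X k 0) (p • (X k 0 * X k 1))
  | r2 : rel5 p a b c d e r₄ (X k 2 * X k 1)
      (a • (X k 2 * X k 0) + X k 0 * X k 2 + b • (X k 1 * X k 2))
  | r3 : rel5 p a b c d e r₄ (X k 2 * X k 2 * X k 0)
      (c • (X k 0 * (X k 2 * X k 2)) + d • (X k 1 * (X k 2 * X k 2)) +
        e • (X k 2 * X k 0 * X k 2))
  | r4 : rel5 p a b c d e r₄ r₄ 0

/-- The algebra `A`. -/
abbrev Alg5 (p a b c d e : k) (r₄ : FreeAlgebra k (Fin 3)) := RingQuot (rel5 k p a b c d e r₄)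

/-- The images of the generators in `A`. -/
abbrev gen5 (p a b c d e : k) (r₄ : FreeAlgebra k (Fin 3)) (i : Fin 3) :
    Alg5 k p a b c d e r₄ :=
  RingQuot.mkAlgHom k (rel5 k p a b c d e r₄) (X k i)

/-- if `d = bc`, then `x₃·(x₃x₁ - c x₂x₃ + (ac - e) x₁x₃) = 0` in `A`; in
particular, if `A` is a domain and `x₃x₁ - c x₂x₃ + (ac - e) x₁x₃ ≠ 0` in `A`, then
`d ≠ bc`. -/
theorem factored_relation (p a b c d e : k) (r₄ : FreeAlgebra k (Fin 3)) :
    letI x₁ := gen5 k p a b c d e r₄ 0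
    letI x₂ := gen5 k p a b c d e r₄ 1
    letI x₃ := gen5 k p a b c d e r₄ 2
    (d = b * c →
      x₃ * (x₃ * x₁ - c • (x₂ * x₃) + (a * c - e) • (x₁ * x₃)) = 0) ∧
    (IsDomain (Alg5 k p a b c d e r₄) →
      x₃ * x₁ - c • (x₂ * x₃) + (a * c - e) • (x₁ * x₃) ≠ 0 → d ≠ b * c) := by

  classical
  set f := RingQuot.mkAlgHom k (rel5 k p a b c d e r₄) with hf
  set x₁ := gen5 k p a b c d e r₄ 0 with hx1
  set x₂ := gen5 k p a b c d e r₄ 1 with hx2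
  set x₃ := gen5 k p a b c d e r₄ 2 with hx3
  have key : ∀ _ : d = b * c,
      x₃ * (x₃ * x₁ - c • (x₂ * x₃) + (a * c - e) • (x₁ * x₃)) = 0 := by
    intro hd
    have e2 : x₃ * x₂ = a • (x₃ * x₁) + x₁ * x₃ + b • (x₂ * x₃) := by
      have := RingQuot.mkAlgHom_rel k (rel5.r2 (p := p) (a := a) (b := b) (c := c)
        (d := d) (e := e) (r₄ := r₄))
      simpa [hx1, hx2, hx3, map_add, map_mul, map_smul] using this
    have e3 : x₃ * x₃ * x₁ =
        c • (x₁ * (x₃ * x₃)) + d • (x₂ * (x₃ * x₃)) + e • (x₃ * x₁ * x₃) := by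
      have := RingQuot.mkAlgHom_rel k (rel5.r3 (p := p) (a := a) (b := b) (c := c)
        (d := d) (e := e) (r₄ := r₄))
      simpa [hx1, hx2, hx3, map_add, map_mul, map_smul] using this
    have e2' : x₃ * x₂ * x₃ =
        a • (x₃ * x₁ * x₃) + x₁ * (x₃ * x₃) + b • (x₂ * (x₃ * x₃)) := by
      rw [e2]; simp [add_mul, smul_mul_assoc, mul_assoc]
    have expand : x₃ * (x₃ * x₁ - c • (x₂ * x₃) + (a * c - e) • (x₁ * x₃)) =
        x₃ * x₃ * x₁ - c • (x₃ * x₂ * x₃) + (a * c - e) • (x₃ * x₁ * x₃) := by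
      simp [mul_sub, mul_add, mul_smul_comm, mul_assoc]
    rw [expand, e3, e2']
    have hdm : d • (x₂ * (x₃ * x₃)) = (b * c) • (x₂ * (x₃ * x₃)) :=
      congrArg (fun t : k => t • (x₂ * (x₃ * x₃))) hd
    rw [hdm]
    module
  refine ⟨key, ?_⟩
  intro hdom hne hd
  have h0 := key hd
  rcases mul_eq_zero.mp h0 with h3 | hfac
  · apply hne
    rw [h3]
    simp
  · exact hne hfac
end
end

section
/- For q ∈ k with q ≠ 1 and b ∈ k^×, let A(b,q) = k⟨x_1,x_2,x_3⟩/(x_2x_1 - q^{-1}x_1x_2, x_3x_2 + (q^2 b)^{-1} x_3x_1 - x_1x_3 - b x_2x_3, x_3^2x_1 + q^3b^2 x_1x_3^2 - (q^2+q)b x_3x_1x_3, x_3x_1^2 + q^3b^2 x_1^2x_3 - (q^2+q)b x_1x_3x_1). Then the element y := x_3x_1 - q^2 b x_1x_3 is a normal element of A(b,q), i.e., yA = Ay. -/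
noncomputable section

open FreeAlgebra

variable (k : Type) [Field k]

/-- The defining relations of the algebra `𝒜(b,q)` of family `𝒜`. -/
inductive relA (b q : k) : FreeAlgebra k (Fin 3) → FreeAlgebra k (Fin 3) → Prop
  | r1 : relA b q (X k 1 * X k 0) (q⁻¹ • (X k 0 * X k 1))
  | r2 : relA b q (X k 2 * X k 1)
      (-(q ^ 2 * b)⁻¹ • (X k 2 * X k 0) + X k 0 * X k 2 + b • (X k 1 * X k 2))
  | r3 : relA b q (X k 2 * X k 2 * X k 0)
      (-(q ^ 3 * b ^ 2) • (X k 0 * (X k 2 * X k 2)) + ((q ^ 2 + q) * b) • (X k 2 * X k 0 * X k 2))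
  | r4 : relA b q (X k 2 * (X k 0 * X k 0))
      (-(q ^ 3 * b ^ 2) • (X k 0 * X k 0 * X k 2) + ((q ^ 2 + q) * b) • (X k 0 * X k 2 * X k 0))

/-- The algebra `𝒜(b,q)`. -/
abbrev AlgA (b q : k) := RingQuot (relA k b q)

/-- The images of the generators `x₁, x₂, x₃` in `𝒜(b,q)`. -/
abbrev genA (b q : k) (i : Fin 3) : AlgA k b q := RingQuot.mkAlgHom k (relA k b q) (X k i)

/-- in `𝒜(b,q)` (with `q ≠ 1`, `b ≠ 0`), the element
`y = x₃x₁ - q²b x₁x₃` is normal. -/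
theorem normal_elem_in_A (b q : k) (hq0 : q ≠ 0) (hq1 : q ≠ 1) (hb : b ≠ 0) :
    IsNormalElem (genA k b q 2 * genA k b q 0 - (q ^ 2 * b) • (genA k b q 0 * genA k b q 2)) := by
  set a0 := genA k b q 0 with ha0
  set a1 := genA k b q 1 with ha1
  set a2 := genA k b q 2 with ha2
  set y := a2 * a0 - (q ^ 2 * b) • (a0 * a2) with hy
  have hqb : q * b ≠ 0 := mul_ne_zero hq0 hb
  have hE1 : a1 * a0 = q⁻¹ • (a0 * a1) := by
    have := RingQuot.mkAlgHom_rel k (relA.r1 (k := k) (b := b) (q := q))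
    simp only [map_mul, map_smul] at this
    exact this
  have hE2 : a2 * a1 = -(q ^ 2 * b)⁻¹ • (a2 * a0) + a0 * a2 + b • (a1 * a2) := by
    have := RingQuot.mkAlgHom_rel k (relA.r2 (k := k) (b := b) (q := q))
    simp only [map_mul, map_smul, map_add] at this
    exact this
  have hE3 : a2 * a2 * a0 =
      -(q ^ 3 * b ^ 2) • (a0 * (a2 * a2)) + ((q ^ 2 + q) * b) • (a2 * a0 * a2) := by
    have := RingQuot.mkAlgHom_rel k (relA.r3 (k := k) (b := b) (q := q))
    simp only [map_mul, map_smul, map_add] at this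
    exact this
  have hE4 : a2 * (a0 * a0) =
      -(q ^ 3 * b ^ 2) • (a0 * a0 * a2) + ((q ^ 2 + q) * b) • (a0 * a2 * a0) := by
    have := RingQuot.mkAlgHom_rel k (relA.r4 (k := k) (b := b) (q := q))
    simp only [map_mul, map_smul, map_add] at this
    exact this
  have hE1' : a0 * a1 = q • (a1 * a0) := by
    rw [hE1, smul_smul, mul_inv_cancel₀ hq0, one_smul]
  have h0 : y * a0 = (q * b) • (a0 * y) := by
    rw [hy]
    rw [sub_mul, mul_assoc a2 a0 a0, hE4]
    simp only [smul_mul_assoc, mul_smul_comm, mul_sub, smul_sub, mul_assoc]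
    module
  have h2 : a2 * y = (q * b) • (y * a2) := by
    rw [hy]
    rw [mul_sub, ← mul_assoc a2 a2 a0, hE3]
    simp only [smul_mul_assoc, mul_smul_comm, sub_mul, smul_sub, mul_assoc]
    module
  have h1 : y * a1 = (q * b) • (a1 * y) := by
    have step1 : y * a1 = q • (a2 * a1 * a0) - (q ^ 2 * b) • (a0 * (a2 * a1)) := by
      rw [hy, sub_mul, smul_mul_assoc, mul_assoc a2 a0 a1, hE1', mul_smul_comm,
        ← mul_assoc a2 a1 a0, mul_assoc a0 a2 a1]
    rw [step1, hE2]
    rw [mul_add, mul_add, mul_smul_comm b a0 (a1 * a2), ← mul_assoc a0 a1 a2, hE1',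
      smul_mul_assoc q (a1 * a0) a2, mul_assoc a1 a0 a2]
    rw [add_mul, add_mul, smul_mul_assoc (-(q ^ 2 * b)⁻¹) (a2 * a0) a0, mul_assoc a2 a0 a0, hE4]
    rw [hy]
    simp only [smul_mul_assoc, mul_smul_comm, mul_add, smul_add, mul_sub, smul_sub, sub_mul,
      add_mul, mul_assoc, smul_smul]
    match_scalars <;> field_simp <;> ring
  have key : ∀ u : FreeAlgebra k (Fin 3),
      (∃ c, y * RingQuot.mkAlgHom k (relA k b q) u = c * y) ∧
      (∃ c, RingQuot.mkAlgHom k (relA k b q) u * y = y * c) := by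
    intro u
    induction u using FreeAlgebra.induction with
    | grade0 r =>
      refine ⟨⟨algebraMap k _ r, ?_⟩, ⟨algebraMap k _ r, ?_⟩⟩ <;>
        simp [AlgHom.commutes, Algebra.commutes]
    | grade1 i =>
      fin_cases i
      · exact ⟨⟨(q * b) • a0, by show y * a0 = ((q * b) • a0) * y; rw [h0, smul_mul_assoc]⟩,
          ⟨(q * b)⁻¹ • a0, by
            show a0 * y = y * ((q * b)⁻¹ • a0)
            rw [mul_smul_comm, h0, inv_smul_smul₀ hqb]⟩⟩
      · exact ⟨⟨(q * b) • a1, by show y * a1 = ((q * b) • a1) * y; rw [h1, smul_mul_assoc]⟩,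
          ⟨(q * b)⁻¹ • a1, by
            show a1 * y = y * ((q * b)⁻¹ • a1)
            rw [mul_smul_comm, h1, inv_smul_smul₀ hqb]⟩⟩
      · exact ⟨⟨(q * b)⁻¹ • a2, by
            show y * a2 = ((q * b)⁻¹ • a2) * y
            rw [smul_mul_assoc, h2, inv_smul_smul₀ hqb]⟩,
          ⟨(q * b) • a2, by show a2 * y = y * ((q * b) • a2); rw [h2, mul_smul_comm]⟩⟩
    | mul u v hu hv =>
      obtain ⟨⟨c, hc⟩, ⟨c', hc'⟩⟩ := hu
      obtain ⟨⟨d, hd⟩, ⟨d', hd'⟩⟩ := hv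
      refine ⟨⟨c * d, ?_⟩, ⟨c' * d', ?_⟩⟩
      · rw [map_mul, ← mul_assoc, hc, mul_assoc, hd, ← mul_assoc]
      · rw [map_mul, mul_assoc, hd', ← mul_assoc, hc', mul_assoc]
    | add u v hu hv =>
      obtain ⟨⟨c, hc⟩, ⟨c', hc'⟩⟩ := hu
      obtain ⟨⟨d, hd⟩, ⟨d', hd'⟩⟩ := hv
      refine ⟨⟨c + d, ?_⟩, ⟨c' + d', ?_⟩⟩
      · rw [map_add, mul_add, hc, hd, add_mul]
      · rw [map_add, add_mul, hc', hd', mul_add]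
  constructor
  · intro a
    obtain ⟨u, rfl⟩ := RingQuot.mkAlgHom_surjective k (relA k b q) a
    exact (key u).1
  · intro a
    obtain ⟨u, rfl⟩ := RingQuot.mkAlgHom_surjective k (relA k b q) a
    exact (key u).2
end
end

section
/- For q ∈ k with q ≠ 0, 1 and b ∈ k^×, there is a graded k-algebra isomorphism σ: A(b,q) → A(q^2 b, q^{-1}) determined by σ(x_1) = b x_2, σ(x_2) = q^{-2}b^{-1} x_1, σ(x_3) = x_3, where A(b,q) is the algebra of family 𝒜 with parameters b, q. -/
noncomputable section

open FreeAlgebra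

variable (k : Type) [Field k]

section aux
variable {k} {A : Type*} [Ring A] [Algebra k A]

lemma keyC (b q : k) (hq0 : q ≠ 0) (hb : b ≠ 0) (w0 w1 w2 : A)
    (H1 : w1 * w0 = q • (w0 * w1))
    (H2 : w2 * w1 = (-b⁻¹) • (w2 * w0) + w0 * w2 + (q ^ 2 * b) • (w1 * w2))
    (H3 : w2 * w2 * w0 = (-(q * b ^ 2)) • (w0 * (w2 * w2)) + ((1 + q) * b) • (w2 * w0 * w2))
    (H4 : w2 * (w0 * w0) = (-(q * b ^ 2)) • (w0 * w0 * w2) + ((1 + q) * b) • (w0 * w2 * w0)) :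
    (((q ^ 2)⁻¹ * b⁻¹) • w0) * (b • w1) = q⁻¹ • ((b • w1) * (((q ^ 2)⁻¹ * b⁻¹) • w0)) ∧
    w2 * (((q ^ 2)⁻¹ * b⁻¹) • w0) =
      (-(q ^ 2 * b)⁻¹) • (w2 * (b • w1)) + (b • w1) * w2 + b • ((((q ^ 2)⁻¹ * b⁻¹) • w0) * w2) ∧
    w2 * w2 * (b • w1) =
      (-(q ^ 3 * b ^ 2)) • ((b • w1) * (w2 * w2)) + ((q ^ 2 + q) * b) • (w2 * (b • w1) * w2) ∧
    w2 * ((b • w1) * (b • w1)) =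
      (-(q ^ 3 * b ^ 2)) • ((b • w1) * (b • w1) * w2) + ((q ^ 2 + q) * b) • ((b • w1) * w2 * (b • w1)) := by
  have D1 : w0 * w1 = q⁻¹ • (w1 * w0) := by rw [H1, smul_smul, inv_mul_cancel₀ hq0, one_smul]
  have D2r : w2 * (w1 * w2) = (-b⁻¹) • (w2 * (w0 * w2)) + w0 * (w2 * w2)
      + (q ^ 2 * b) • (w1 * (w2 * w2)) := by
    have := congrArg (· * w2) H2
    simpa [add_mul, smul_mul_assoc, mul_assoc] using this
  have D2l : w2 * (w2 * w1) = (-b⁻¹) • (w2 * (w2 * w0)) + w2 * (w0 * w2)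
      + (q ^ 2 * b) • (w2 * (w1 * w2)) := by
    have := congrArg (w2 * ·) H2
    simpa [mul_add, mul_smul_comm, mul_assoc] using this
  have D3 : w2 * (w2 * w0) = (-(q * b ^ 2)) • (w0 * (w2 * w2)) + ((1 + q) * b) • (w2 * (w0 * w2)) := by
    simpa [mul_assoc] using H3
  have D4 : w2 * (w0 * w0) = (-(q * b ^ 2)) • (w0 * (w0 * w2)) + ((1 + q) * b) • (w0 * (w2 * w0)) := by
    simpa [mul_assoc] using H4
  have D2r0 : w2 * (w1 * w0) = (-b⁻¹) • (w2 * (w0 * w0)) + w0 * (w2 * w0)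
      + (q ^ 2 * b) • (w1 * (w2 * w0)) := by
    have := congrArg (· * w0) H2
    simpa [add_mul, smul_mul_assoc, mul_assoc] using this
  have D2r1 : w2 * (w1 * w1) = (-b⁻¹) • (w2 * (w0 * w1)) + w0 * (w2 * w1)
      + (q ^ 2 * b) • (w1 * (w2 * w1)) := by
    have := congrArg (· * w1) H2
    simpa [add_mul, smul_mul_assoc, mul_assoc] using this
  have D2l0 : w0 * (w2 * w1) = (-b⁻¹) • (w0 * (w2 * w0)) + w0 * (w0 * w2)
      + (q ^ 2 * b) • (w0 * (w1 * w2)) := by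
    have := congrArg (w0 * ·) H2
    simpa [mul_add, mul_smul_comm, mul_assoc] using this
  have D2l1 : w1 * (w2 * w1) = (-b⁻¹) • (w1 * (w2 * w0)) + w1 * (w0 * w2)
      + (q ^ 2 * b) • (w1 * (w1 * w2)) := by
    have := congrArg (w1 * ·) H2
    simpa [mul_add, mul_smul_comm, mul_assoc] using this
  have D1r : w0 * (w1 * w2) = q⁻¹ • (w1 * (w0 * w2)) := by
    have := congrArg (· * w2) D1
    simpa [smul_mul_assoc, mul_assoc] using this
  have D1l : w2 * (w0 * w1) = q⁻¹ • (w2 * (w1 * w0)) := by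
    have := congrArg (w2 * ·) D1
    simpa [mul_smul_comm] using this
  refine ⟨?_, ?_, ?_, ?_⟩
  · simp only [smul_mul_assoc, mul_smul_comm, smul_smul, mul_assoc]
    rw [H1]
    match_scalars <;> field_simp <;> ring
  · simp only [smul_mul_assoc, mul_smul_comm, smul_smul, mul_assoc]
    rw [H2]
    match_scalars <;> field_simp <;> ring
  · simp only [smul_mul_assoc, mul_smul_comm, smul_smul, mul_assoc]
    rw [D2l, D3, D2r]
    match_scalars <;> field_simp <;> ring
  · simp only [smul_mul_assoc, mul_smul_comm, smul_smul, mul_assoc]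
    rw [D2r1, D1l, D2r0, D4, D2l0, D1r, D2l1]
    match_scalars <;> field_simp <;> ring

end aux

/-- there is a graded algebra isomorphism `σ : 𝒜(b,q) → 𝒜(q²b, q⁻¹)` with
`σ(x₁) = b x₂`, `σ(x₂) = q⁻²b⁻¹ x₁`, `σ(x₃) = x₃`. -/
theorem iso_A_to_A (b q : k) (hq0 : q ≠ 0) (hq1 : q ≠ 1) (hb : b ≠ 0) :
    ∃ σ : AlgA k b q ≃ₐ[k] AlgA k (q ^ 2 * b) q⁻¹,
      σ (genA k b q 0) = b • genA k (q ^ 2 * b) q⁻¹ 1 ∧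
      σ (genA k b q 1) = ((q ^ 2)⁻¹ * b⁻¹) • genA k (q ^ 2 * b) q⁻¹ 0 ∧
      σ (genA k b q 2) = genA k (q ^ 2 * b) q⁻¹ 2 := by
  have hB : q ^ 2 * b ≠ 0 := mul_ne_zero (pow_ne_zero _ hq0) hb
  have hQ : (q⁻¹ : k) ≠ 0 := inv_ne_zero hq0
  set g : Fin 3 → AlgA k (q ^ 2 * b) q⁻¹ := genA k (q ^ 2 * b) q⁻¹ with hg
  set x : Fin 3 → AlgA k b q := genA k b q with hx
  -- relations in the target algebra
  have T1 := RingQuot.mkAlgHom_rel k (relA.r1 (k := k) (b := q ^ 2 * b) (q := q⁻¹))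
  have T2 := RingQuot.mkAlgHom_rel k (relA.r2 (k := k) (b := q ^ 2 * b) (q := q⁻¹))
  have T3 := RingQuot.mkAlgHom_rel k (relA.r3 (k := k) (b := q ^ 2 * b) (q := q⁻¹))
  have T4 := RingQuot.mkAlgHom_rel k (relA.r4 (k := k) (b := q ^ 2 * b) (q := q⁻¹))
  simp only [map_mul, map_add, map_smul] at T1 T2 T3 T4
  -- relations in the source algebra
  have S1 := RingQuot.mkAlgHom_rel k (relA.r1 (k := k) (b := b) (q := q))
  have S2 := RingQuot.mkAlgHom_rel k (relA.r2 (k := k) (b := b) (q := q))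
  have S3 := RingQuot.mkAlgHom_rel k (relA.r3 (k := k) (b := b) (q := q))
  have S4 := RingQuot.mkAlgHom_rel k (relA.r4 (k := k) (b := b) (q := q))
  simp only [map_mul, map_add, map_smul] at S1 S2 S3 S4
  rw [inv_inv] at T1
  have T2' : RingQuot.mkAlgHom k (relA k (q^2*b) q⁻¹) (X k 2) * RingQuot.mkAlgHom k (relA k (q^2*b) q⁻¹) (X k 1)
      = (-b⁻¹) • (RingQuot.mkAlgHom k (relA k (q^2*b) q⁻¹) (X k 2) * RingQuot.mkAlgHom k (relA k (q^2*b) q⁻¹) (X k 0))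
      + RingQuot.mkAlgHom k (relA k (q^2*b) q⁻¹) (X k 0) * RingQuot.mkAlgHom k (relA k (q^2*b) q⁻¹) (X k 2)
      + (q ^ 2 * b) • (RingQuot.mkAlgHom k (relA k (q^2*b) q⁻¹) (X k 1) * RingQuot.mkAlgHom k (relA k (q^2*b) q⁻¹) (X k 2)) := by
    rw [T2]; match_scalars <;> field_simp
  have T3' : RingQuot.mkAlgHom k (relA k (q^2*b) q⁻¹) (X k 2) * RingQuot.mkAlgHom k (relA k (q^2*b) q⁻¹) (X k 2) * RingQuot.mkAlgHom k (relA k (q^2*b) q⁻¹) (X k 0)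
      = (-(q * b ^ 2)) • (RingQuot.mkAlgHom k (relA k (q^2*b) q⁻¹) (X k 0) * (RingQuot.mkAlgHom k (relA k (q^2*b) q⁻¹) (X k 2) * RingQuot.mkAlgHom k (relA k (q^2*b) q⁻¹) (X k 2)))
      + ((1 + q) * b) • (RingQuot.mkAlgHom k (relA k (q^2*b) q⁻¹) (X k 2) * RingQuot.mkAlgHom k (relA k (q^2*b) q⁻¹) (X k 0) * RingQuot.mkAlgHom k (relA k (q^2*b) q⁻¹) (X k 2)) := by
    rw [T3]; match_scalars <;> field_simp <;> ring
  have T4' : RingQuot.mkAlgHom k (relA k (q^2*b) q⁻¹) (X k 2) * (RingQuot.mkAlgHom k (relA k (q^2*b) q⁻¹) (X k 0) * RingQuot.mkAlgHom k (relA k (q^2*b) q⁻¹) (X k 0))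
      = (-(q * b ^ 2)) • (RingQuot.mkAlgHom k (relA k (q^2*b) q⁻¹) (X k 0) * RingQuot.mkAlgHom k (relA k (q^2*b) q⁻¹) (X k 0) * RingQuot.mkAlgHom k (relA k (q^2*b) q⁻¹) (X k 2))
      + ((1 + q) * b) • (RingQuot.mkAlgHom k (relA k (q^2*b) q⁻¹) (X k 0) * RingQuot.mkAlgHom k (relA k (q^2*b) q⁻¹) (X k 2) * RingQuot.mkAlgHom k (relA k (q^2*b) q⁻¹) (X k 0)) := by
    rw [T4]; match_scalars <;> field_simp <;> ring
  obtain ⟨C1g, C2g, C3g, C4g⟩ := keyC b q hq0 hb _ _ _ T1 T2' T3' T4'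
  have S2' : RingQuot.mkAlgHom k (relA k b q) (X k 2) * RingQuot.mkAlgHom k (relA k b q) (X k 1)
      = (-(q ^ 2 * b)⁻¹) • (RingQuot.mkAlgHom k (relA k b q) (X k 2) * RingQuot.mkAlgHom k (relA k b q) (X k 0))
      + RingQuot.mkAlgHom k (relA k b q) (X k 0) * RingQuot.mkAlgHom k (relA k b q) (X k 2)
      + ((q⁻¹) ^ 2 * (q ^ 2 * b)) • (RingQuot.mkAlgHom k (relA k b q) (X k 1) * RingQuot.mkAlgHom k (relA k b q) (X k 2)) := by
    rw [S2]; match_scalars <;> field_simp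
  have S3' : RingQuot.mkAlgHom k (relA k b q) (X k 2) * RingQuot.mkAlgHom k (relA k b q) (X k 2) * RingQuot.mkAlgHom k (relA k b q) (X k 0)
      = (-(q⁻¹ * (q ^ 2 * b) ^ 2)) • (RingQuot.mkAlgHom k (relA k b q) (X k 0) * (RingQuot.mkAlgHom k (relA k b q) (X k 2) * RingQuot.mkAlgHom k (relA k b q) (X k 2)))
      + ((1 + q⁻¹) * (q ^ 2 * b)) • (RingQuot.mkAlgHom k (relA k b q) (X k 2) * RingQuot.mkAlgHom k (relA k b q) (X k 0) * RingQuot.mkAlgHom k (relA k b q) (X k 2)) := by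
    rw [S3]; match_scalars <;> field_simp <;> ring
  have S4' : RingQuot.mkAlgHom k (relA k b q) (X k 2) * (RingQuot.mkAlgHom k (relA k b q) (X k 0) * RingQuot.mkAlgHom k (relA k b q) (X k 0))
      = (-(q⁻¹ * (q ^ 2 * b) ^ 2)) • (RingQuot.mkAlgHom k (relA k b q) (X k 0) * RingQuot.mkAlgHom k (relA k b q) (X k 0) * RingQuot.mkAlgHom k (relA k b q) (X k 2))
      + ((1 + q⁻¹) * (q ^ 2 * b)) • (RingQuot.mkAlgHom k (relA k b q) (X k 0) * RingQuot.mkAlgHom k (relA k b q) (X k 2) * RingQuot.mkAlgHom k (relA k b q) (X k 0)) := by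
    rw [S4]; match_scalars <;> field_simp <;> ring
  obtain ⟨C1x, C2x, C3x, C4x⟩ := keyC (q ^ 2 * b) q⁻¹ hQ hB _ _ _ S1 S2' S3' S4'
  -- forward algebra hom on the free algebra
  set F : FreeAlgebra k (Fin 3) →ₐ[k] AlgA k (q ^ 2 * b) q⁻¹ :=
    FreeAlgebra.lift k
      ![b • RingQuot.mkAlgHom k (relA k (q^2*b) q⁻¹) (X k 1),
        ((q ^ 2)⁻¹ * b⁻¹) • RingQuot.mkAlgHom k (relA k (q^2*b) q⁻¹) (X k 0),
        RingQuot.mkAlgHom k (relA k (q^2*b) q⁻¹) (X k 2)] with hF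
  have hF0 : F (X k 0) = b • RingQuot.mkAlgHom k (relA k (q^2*b) q⁻¹) (X k 1) := by
    simp [hF]
  have hF1 : F (X k 1) = ((q ^ 2)⁻¹ * b⁻¹) • RingQuot.mkAlgHom k (relA k (q^2*b) q⁻¹) (X k 0) := by
    simp [hF]
  have hF2 : F (X k 2) = RingQuot.mkAlgHom k (relA k (q^2*b) q⁻¹) (X k 2) := by
    simp [hF]
  have hFrel : ∀ ⦃u v⦄, relA k b q u v → F u = F v := by
    intro u v h
    induction h with
    | r1 => simp only [map_mul, map_smul, hF0, hF1]; exact C1g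
    | r2 => simp only [map_mul, map_add, map_smul, hF0, hF1, hF2]; exact C2g
    | r3 => simp only [map_mul, map_add, map_smul, hF0, hF1, hF2]; exact C3g
    | r4 => simp only [map_mul, map_add, map_smul, hF0, hF1, hF2]; exact C4g
  set G : FreeAlgebra k (Fin 3) →ₐ[k] AlgA k b q :=
    FreeAlgebra.lift k
      ![(q ^ 2 * b) • RingQuot.mkAlgHom k (relA k b q) (X k 1),
        ((q⁻¹ ^ 2)⁻¹ * (q ^ 2 * b)⁻¹) • RingQuot.mkAlgHom k (relA k b q) (X k 0),
        RingQuot.mkAlgHom k (relA k b q) (X k 2)] with hG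
  have hG0 : G (X k 0) = (q ^ 2 * b) • RingQuot.mkAlgHom k (relA k b q) (X k 1) := by
    simp [hG]
  have hG1 : G (X k 1) = ((q⁻¹ ^ 2)⁻¹ * (q ^ 2 * b)⁻¹) • RingQuot.mkAlgHom k (relA k b q) (X k 0) := by
    simp [hG]
  have hG2 : G (X k 2) = RingQuot.mkAlgHom k (relA k b q) (X k 2) := by
    simp [hG]
  have hGrel : ∀ ⦃u v⦄, relA k (q ^ 2 * b) q⁻¹ u v → G u = G v := by
    intro u v h
    induction h with
    | r1 => simp only [map_mul, map_smul, hG0, hG1]; exact C1x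
    | r2 => simp only [map_mul, map_add, map_smul, hG0, hG1, hG2]; exact C2x
    | r3 => simp only [map_mul, map_add, map_smul, hG0, hG1, hG2]; exact C3x
    | r4 => simp only [map_mul, map_add, map_smul, hG0, hG1, hG2]; exact C4x
  set Fq : AlgA k b q →ₐ[k] AlgA k (q ^ 2 * b) q⁻¹ := RingQuot.liftAlgHom k ⟨F, hFrel⟩ with hFq
  set Gq : AlgA k (q ^ 2 * b) q⁻¹ →ₐ[k] AlgA k b q := RingQuot.liftAlgHom k ⟨G, hGrel⟩ with hGq
  have hFqx : ∀ u, Fq (RingQuot.mkAlgHom k (relA k b q) u) = F u := fun u => by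
    rw [hFq, RingQuot.liftAlgHom_mkAlgHom_apply]
  have hGqx : ∀ u, Gq (RingQuot.mkAlgHom k (relA k (q^2*b) q⁻¹) u) = G u := fun u => by
    rw [hGq, RingQuot.liftAlgHom_mkAlgHom_apply]
  have hFG : Fq.comp Gq = AlgHom.id k (AlgA k (q ^ 2 * b) q⁻¹) := by
    apply RingQuot.ringQuot_ext'
    apply FreeAlgebra.hom_ext
    funext i
    fin_cases i <;>
      simp only [Function.comp_apply, AlgHom.comp_apply, RingQuot.mkAlgHom_rel,
        AlgHom.coe_comp, AlgHom.id_comp] <;>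
      simp [hFqx, hGqx, hG0, hG1, hG2, hF0, hF1, hF2, smul_smul] <;>
      (try (match_scalars <;> field_simp <;> try ring))
  have hGF : Gq.comp Fq = AlgHom.id k (AlgA k b q) := by
    apply RingQuot.ringQuot_ext'
    apply FreeAlgebra.hom_ext
    funext i
    fin_cases i <;>
      simp only [Function.comp_apply, AlgHom.comp_apply, AlgHom.coe_comp, AlgHom.id_comp] <;>
      simp [hFqx, hGqx, hG0, hG1, hG2, hF0, hF1, hF2, smul_smul] <;>
      (try (match_scalars <;> field_simp <;> try ring))
  refine ⟨AlgEquiv.ofAlgHom Fq Gq hFG hGF, ?_, ?_, ?_⟩ <;>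
    simp [hFqx, hF0, hF1, hF2, hx, hg]
end
end

section
/- For q ∈ k with q ≠ 0, 1 and b ∈ k^×, the opposite algebra of A(b,q) is isomorphic as a graded algebra to A(1/b, 1/q), where A(b,q) is the algebra of family 𝒜 with parameters b, q. -/
noncomputable section

open FreeAlgebra

variable (k : Type) [Field k]

namespace OppA
open MulOpposite
variable {k}

lemma hrel1 (b q : k) : genA k b q 1 * genA k b q 0 = q⁻¹ • (genA k b q 0 * genA k b q 1) := by
  simpa only [map_mul, map_smul] using RingQuot.mkAlgHom_rel k (relA.r1 (k := k) (b := b) (q := q))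

lemma hrel2 (b q : k) : genA k b q 2 * genA k b q 1 =
    -(q ^ 2 * b)⁻¹ • (genA k b q 2 * genA k b q 0) + genA k b q 0 * genA k b q 2
      + b • (genA k b q 1 * genA k b q 2) := by
  simpa only [map_mul, map_smul, map_add] using
    RingQuot.mkAlgHom_rel k (relA.r2 (k := k) (b := b) (q := q))

lemma hrel3 (b q : k) : genA k b q 2 * genA k b q 2 * genA k b q 0 =
    -(q ^ 3 * b ^ 2) • (genA k b q 0 * (genA k b q 2 * genA k b q 2))
      + ((q ^ 2 + q) * b) • (genA k b q 2 * genA k b q 0 * genA k b q 2) := by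
  simpa only [map_mul, map_smul, map_add] using
    RingQuot.mkAlgHom_rel k (relA.r3 (k := k) (b := b) (q := q))

lemma hrel4 (b q : k) : genA k b q 2 * (genA k b q 0 * genA k b q 0) =
    -(q ^ 3 * b ^ 2) • (genA k b q 0 * genA k b q 0 * genA k b q 2)
      + ((q ^ 2 + q) * b) • (genA k b q 0 * genA k b q 2 * genA k b q 0) := by
  simpa only [map_mul, map_smul, map_add] using
    RingQuot.mkAlgHom_rel k (relA.r4 (k := k) (b := b) (q := q))

def μ (b q : k) : Fin 3 → k := ![q ^ 2 * b ^ 2, 1, 1]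

def Fmap (b q : k) : FreeAlgebra k (Fin 3) →ₐ[k] (AlgA k b⁻¹ q⁻¹)ᵐᵒᵖ :=
  FreeAlgebra.lift k fun i => op (μ b q i • genA k b⁻¹ q⁻¹ i)

lemma Fmap_rel (b q : k) (hq0 : q ≠ 0) (hb : b ≠ 0) ⦃x y⦄ (h : relA k b q x y) :
    Fmap b q x = Fmap b q y := by
  induction h with
  | r1 =>
    apply unop_injective
    simp only [Fmap, X, map_mul, map_smul, lift_ι_apply, μ, Matrix.cons_val_zero,
      Matrix.cons_val_one, Matrix.head_cons, unop_mul, unop_smul, unop_op, one_smul,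
      smul_mul_assoc, mul_smul_comm]
    rw [hrel1 b⁻¹ q⁻¹]; try simp only [mul_assoc]
    all_goals match_scalars <;> field_simp <;> ring
  | r2 =>
    apply unop_injective
    simp only [Fmap, X, map_mul, map_smul, map_add, lift_ι_apply, μ, Matrix.cons_val_zero,
      Matrix.cons_val_one, Matrix.head_cons, Fin.isValue, Matrix.cons_val_two, Matrix.tail_cons,
      unop_mul, unop_smul, unop_add, unop_op, unop_neg, one_smul,
      smul_mul_assoc, mul_smul_comm]
    rw [hrel2 b⁻¹ q⁻¹]; try simp only [mul_assoc]
    all_goals match_scalars <;> field_simp <;> ring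
  | r3 =>
    apply unop_injective
    simp only [Fmap, X, map_mul, map_smul, map_add, lift_ι_apply, μ, Matrix.cons_val_zero,
      Matrix.cons_val_one, Matrix.head_cons, Fin.isValue, Matrix.cons_val_two, Matrix.tail_cons,
      unop_mul, unop_smul, unop_add, unop_op, unop_neg, one_smul,
      smul_mul_assoc, mul_smul_comm]
    rw [hrel3 b⁻¹ q⁻¹]; try simp only [mul_assoc]
    all_goals match_scalars <;> field_simp <;> ring
  | r4 =>
    apply unop_injective
    simp only [Fmap, X, map_mul, map_smul, map_add, lift_ι_apply, μ, Matrix.cons_val_zero,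
      Matrix.cons_val_one, Matrix.head_cons, Fin.isValue, Matrix.cons_val_two, Matrix.tail_cons,
      unop_mul, unop_smul, unop_add, unop_op, unop_neg, one_smul,
      smul_mul_assoc, mul_smul_comm]
    rw [hrel4 b⁻¹ q⁻¹]; try simp only [mul_assoc]
    all_goals match_scalars <;> field_simp <;> ring



def toOp (b q b' q' : k) (hb' : b' = b⁻¹) (hq' : q' = q⁻¹) (hq0 : q ≠ 0) (hb : b ≠ 0) :
    AlgA k b q →ₐ[k] (AlgA k b' q')ᵐᵒᵖ := by
  subst hb' hq'
  exact RingQuot.liftAlgHom k ⟨Fmap b q, Fmap_rel b q hq0 hb⟩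

lemma toOp_gen (b q b' q' : k) (hb' : b' = b⁻¹) (hq' : q' = q⁻¹) (hq0 : q ≠ 0) (hb : b ≠ 0)
    (i : Fin 3) :
    toOp b q b' q' hb' hq' hq0 hb (genA k b q i) = op (μ b q i • genA k b' q' i) := by
  subst hb' hq'
  show (RingQuot.liftAlgHom k ⟨Fmap b q, Fmap_rel b q hq0 hb⟩)
      (RingQuot.mkAlgHom k (relA k b q) (X k i)) = _
  rw [RingQuot.liftAlgHom_mkAlgHom_apply]
  simp [Fmap]

end OppA

/-- the opposite algebra of `𝒜(b,q)` is isomorphic, as a graded algebra,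
to `𝒜(1/b, 1/q)`.  (Gradedness of the isomorphism is expressed by requiring that the
generators, which span the degree-one part, are mapped into the span of the generators.) -/
theorem opposite_A (b q : k) (hq0 : q ≠ 0) (hq1 : q ≠ 1) (hb : b ≠ 0) :
    ∃ e : (AlgA k b q)ᵐᵒᵖ ≃ₐ[k] AlgA k b⁻¹ q⁻¹,
      ∀ i : Fin 3, e (MulOpposite.op (genA k b q i)) ∈
        Submodule.span k {genA k b⁻¹ q⁻¹ 0, genA k b⁻¹ q⁻¹ 1, genA k b⁻¹ q⁻¹ 2} := by
  classical
  have hq0' : q⁻¹ ≠ 0 := inv_ne_zero hq0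
  have hb0' : b⁻¹ ≠ 0 := inv_ne_zero hb
  set g1 := OppA.toOp (k := k) b q b⁻¹ q⁻¹ rfl rfl hq0 hb with hg1
  set g2 := OppA.toOp (k := k) b⁻¹ q⁻¹ b q (inv_inv b).symm (inv_inv q).symm hq0' hb0' with hg2
  set F := AlgHom.opComm g1 with hFdef
  have hF : ∀ a : AlgA k b q, F (MulOpposite.op a) = MulOpposite.unop (g1 a) := fun a => rfl
  have hgen : ∀ i : Fin 3, F (MulOpposite.op (genA k b q i)) = OppA.μ b q i • genA k b⁻¹ q⁻¹ i := by
    intro i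
    rw [hF, OppA.toOp_gen]
    simp
  have h1 : F.comp g2 = AlgHom.id k (AlgA k b⁻¹ q⁻¹) := by
    apply RingQuot.ringQuot_ext'
    apply FreeAlgebra.hom_ext
    funext i
    show F (g2 (genA k b⁻¹ q⁻¹ i)) = genA k b⁻¹ q⁻¹ i
    rw [hg2, OppA.toOp_gen, MulOpposite.op_smul, map_smul, hF, hg1, OppA.toOp_gen]
    simp only [MulOpposite.unop_smul, MulOpposite.unop_op, smul_smul]
    fin_cases i <;> simp [OppA.μ] <;> field_simp <;> rw [one_smul]
  have key : ∀ x : FreeAlgebra k (Fin 3),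
      g2 (F (MulOpposite.op (RingQuot.mkAlgHom k (relA k b q) x)))
        = MulOpposite.op (RingQuot.mkAlgHom k (relA k b q) x) := by
    intro x
    induction x using FreeAlgebra.induction with
    | grade0 r => simp [hF]
    | grade1 i =>
        show g2 (F (MulOpposite.op (genA k b q i))) = MulOpposite.op (genA k b q i)
        rw [hgen, map_smul, hg2, OppA.toOp_gen]
        simp only [MulOpposite.op_smul, smul_smul]
        fin_cases i <;> simp [OppA.μ] <;> field_simp <;> rw [one_smul]
    | mul x y ihx ihy =>
        rw [map_mul, MulOpposite.op_mul, map_mul, map_mul, ihx, ihy]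
    | add x y ihx ihy =>
        rw [map_add, MulOpposite.op_add, map_add, map_add, ihx, ihy]
  have h2 : g2.comp F = AlgHom.id k ((AlgA k b q)ᵐᵒᵖ) := by
    apply AlgHom.ext
    intro z
    obtain ⟨x, hx⟩ := RingQuot.mkAlgHom_surjective k (relA k b q) (MulOpposite.unop z)
    have hz : z = MulOpposite.op (RingQuot.mkAlgHom k (relA k b q) x) := by
      rw [hx, MulOpposite.op_unop]
    rw [hz]
    exact key x
  refine ⟨AlgEquiv.ofAlgHom F g2 h1 h2, ?_⟩
  intro i
  have : (AlgEquiv.ofAlgHom F g2 h1 h2) (MulOpposite.op (genA k b q i))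
      = F (MulOpposite.op (genA k b q i)) := rfl
  rw [this, hgen]
  refine Submodule.smul_mem _ _ (Submodule.subset_span ?_)
  fin_cases i <;> simp
end
end

section
/- For b ∈ k^×, let ℬ(b) = k⟨x_1,x_2,x_3⟩/(x_2x_1 + x_1x_2, x_3x_2 + b^{-1}x_3x_1 - x_1x_3 - b x_2x_3, x_3^2x_1 - b^2 x_1x_3^2, x_3x_1^2 + b^3 x_1x_2x_3 - b x_1x_3x_1 - b^2 x_2x_3x_1). Then the map x_1 ↦ b x_2, x_2 ↦ b^{-1} x_1, x_3 ↦ x_3 extends to a graded k-algebra automorphism of ℬ(b). -/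
noncomputable section

open FreeAlgebra

variable (k : Type) [Field k]

inductive relB (b : k) : FreeAlgebra k (Fin 3) → FreeAlgebra k (Fin 3) → Prop
  | r1 : relB b (X k 1 * X k 0)
      (-(X k 0 * X k 1))
  | r2 : relB b (X k 2 * X k 1)
      (-b⁻¹ • (X k 2 * X k 0) + X k 0 * X k 2 + b • (X k 1 * X k 2))
  | r3 : relB b (X k 2 * X k 2 * X k 0)
      (b ^ 2 • (X k 0 * (X k 2 * X k 2)))
  | r4 : relB b (X k 2 * (X k 0 * X k 0))
      (-(b ^ 3) • (X k 0 * X k 1 * X k 2) + b • (X k 0 * X k 2 * X k 0) + b ^ 2 • (X k 1 * X k 2 * X k 0))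

/-- The algebra `ℬ(b)`. -/
abbrev AlgB (b : k) := RingQuot (relB k b)

/-- The images of the generators in `ℬ(b)`. -/
abbrev genB (b : k) (i : Fin 3) : AlgB k b := RingQuot.mkAlgHom k (relB k b) (X k i)

variable {k} in
theorem auto_of_B' (b : k) (hb : b ≠ 0) :
    ∃ σ : AlgB k b ≃ₐ[k] AlgB k b,
      σ (genB k b 0) = b • genB k b 1 ∧
      σ (genB k b 1) = b⁻¹ • genB k b 0 ∧
      σ (genB k b 2) = genB k b 2 := by
  classical
  set π := RingQuot.mkAlgHom k (relB k b) with hπ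
  set y : Fin 3 → AlgB k b := fun i => π (X k i) with hy
  have hy0 : π (X k 0) = y 0 := rfl
  have hy1 : π (X k 1) = y 1 := rfl
  have hy2 : π (X k 2) = y 2 := rfl
  set s : FreeAlgebra k (Fin 3) →ₐ[k] FreeAlgebra k (Fin 3) :=
    FreeAlgebra.lift k ![b • X k 1, b⁻¹ • X k 0, X k 2] with hs
  set φ : FreeAlgebra k (Fin 3) →ₐ[k] AlgB k b := π.comp s with hφ
  have hs0 : s (X k 0) = b • X k 1 := by simp [hs]
  have hs1 : s (X k 1) = b⁻¹ • X k 0 := by simp [hs]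
  have hs2 : s (X k 2) = X k 2 := by simp [hs]
  -- relations in the quotient, right-associated, negs as scalars
  have h1 : y 1 * y 0 = (-1 : k) • (y 0 * y 1) := by
    have := RingQuot.mkAlgHom_rel k (relB.r1 (b := b))
    simp only [map_mul, map_neg, ← hπ, hy0, hy1] at this
    rw [this]; try module
  have h2 : y 2 * y 1 = (-b⁻¹) • (y 2 * y 0) + y 0 * y 2 + b • (y 1 * y 2) := by
    have := RingQuot.mkAlgHom_rel k (relB.r2 (b := b))
    simp only [map_mul, map_add, map_smul, ← hπ, hy0, hy1, hy2] at this
    rw [this]; try module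
  have h3 : y 2 * (y 2 * y 0) = b ^ 2 • (y 0 * (y 2 * y 2)) := by
    have := RingQuot.mkAlgHom_rel k (relB.r3 (b := b))
    simp only [map_mul, map_smul, mul_assoc, ← hπ, hy0, hy2] at this
    rw [this]
  have h4 : y 2 * (y 0 * y 0) = (-(b ^ 3)) • (y 0 * (y 1 * y 2)) + b • (y 0 * (y 2 * y 0))
      + b ^ 2 • (y 1 * (y 2 * y 0)) := by
    have := RingQuot.mkAlgHom_rel k (relB.r4 (b := b))
    simp only [map_mul, map_add, map_smul, mul_assoc, ← hπ, hy0, hy1, hy2] at this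
    rw [this]
  -- derived, z-parametrized versions
  have h1z : ∀ z, y 1 * (y 0 * z) = (-1 : k) • (y 0 * (y 1 * z)) := by
    intro z; rw [← mul_assoc, h1, smul_mul_assoc, mul_assoc]
  have h2z : ∀ z, y 2 * (y 1 * z)
      = (-b⁻¹) • (y 2 * (y 0 * z)) + y 0 * (y 2 * z) + b • (y 1 * (y 2 * z)) := by
    intro z
    rw [← mul_assoc, h2]
    simp only [add_mul, smul_mul_assoc, mul_assoc]
  have hA : y 2 * (y 0 * y 1) = (-(b ^ 2)) • (y 0 * (y 1 * y 2)) := by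
    have e : y 0 * y 1 = (-1 : k) • (y 1 * y 0) := by rw [h1]; module
    rw [e, mul_smul_comm, h2z (y 0), h4]
    match_scalars <;> first | ring1 | (field_simp; (try left); (try ring1))
  -- the relations are preserved by the substitution
  have hrel : ∀ ⦃u v⦄, relB k b u v → φ u = φ v := by
    intro u v h
    induction h with
    | r1 =>
        simp only [hφ, AlgHom.comp_apply, map_mul, map_neg, map_smul, hs0, hs1, hy0, hy1,
          smul_mul_assoc, mul_smul_comm, smul_smul]
        rw [h1]
        match_scalars <;> first | ring1 | (field_simp; (try left); (try ring1))
    | r2 =>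
        simp only [hφ, AlgHom.comp_apply, map_mul, map_neg, map_smul, map_add, hs0, hs1, hs2,
          hy0, hy1, hy2, smul_mul_assoc, mul_smul_comm, smul_smul]
        rw [h2]
        match_scalars <;> first | ring1 | (field_simp; (try left); (try ring1))
    | r3 =>
        simp only [hφ, AlgHom.comp_apply, map_mul, map_neg, map_smul, map_add, hs0, hs1, hs2,
          hy0, hy1, hy2, smul_mul_assoc, mul_smul_comm, smul_smul, mul_assoc]
        rw [h2]
        simp only [mul_add, mul_smul_comm]
        rw [h3, h2z (y 2)]
        match_scalars <;> first | ring1 | (field_simp; (try left); (try ring1))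
    | r4 =>
        simp only [hφ, AlgHom.comp_apply, map_mul, map_neg, map_smul, map_add, hs0, hs1, hs2,
          hy0, hy1, hy2, smul_mul_assoc, mul_smul_comm, smul_smul, mul_assoc]
        rw [h2z (y 1), hA]
        simp only [h2]
        simp only [mul_add, mul_smul_comm, smul_add, smul_smul]
        simp only [h1z]
        simp only [mul_add, mul_smul_comm, smul_add, smul_smul]
        match_scalars <;> first | ring1 | (field_simp; (try left); (try ring1))
  -- the induced endomorphism of the quotient
  set f : AlgB k b →ₐ[k] AlgB k b := RingQuot.liftAlgHom k ⟨φ, hrel⟩ with hf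
  have hf0 : f (y 0) = b • y 1 := by
    rw [hy, hf, hπ]
    rw [RingQuot.liftAlgHom_mkAlgHom_apply]
    simp only [hφ, AlgHom.comp_apply, hs0, map_smul, ← hπ, hy1]
  have hf1 : f (y 1) = b⁻¹ • y 0 := by
    rw [hy, hf, hπ]
    rw [RingQuot.liftAlgHom_mkAlgHom_apply]
    simp only [hφ, AlgHom.comp_apply, hs1, map_smul, ← hπ, hy0]
  have hf2 : f (y 2) = y 2 := by
    rw [hy, hf, hπ]
    rw [RingQuot.liftAlgHom_mkAlgHom_apply]
    simp only [hφ, AlgHom.comp_apply, hs2, ← hπ, hy2]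
  -- f is an involution
  have hinv : f.comp f = AlgHom.id k (AlgB k b) := by
    apply RingQuot.ringQuot_ext'
    rw [← hπ]
    apply FreeAlgebra.hom_ext
    funext i
    fin_cases i
    · show f (f (π (X k 0))) = π (X k 0)
      rw [hy0, hf0, map_smul, hf1, smul_smul, mul_inv_cancel₀ hb, one_smul]
    · show f (f (π (X k 1))) = π (X k 1)
      rw [hy1, hf1, map_smul, hf0, smul_smul, inv_mul_cancel₀ hb, one_smul]
    · show f (f (π (X k 2))) = π (X k 2)
      rw [hy2, hf2, hf2]
  -- assemble the equivalence
  refine ⟨AlgEquiv.ofAlgHom f f hinv hinv, ?_, ?_, ?_⟩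
  · show f (π (X k 0)) = b • π (X k 1)
    rw [hy0, hf0, hy1]
  · show f (π (X k 1)) = b⁻¹ • π (X k 0)
    rw [hy1, hf1, hy0]
  · show f (π (X k 2)) = π (X k 2)
    rw [hy2, hf2]

/-- for `b ≠ 0`, the map `x₁ ↦ b x₂, x₂ ↦ b⁻¹x₁, x₃ ↦ x₃` extends to a graded
algebra automorphism of `ℬ(b)`. -/
theorem auto_of_B (b : k) (hb : b ≠ 0) :
    ∃ σ : AlgB k b ≃ₐ[k] AlgB k b,
      σ (genB k b 0) = b • genB k b 1 ∧
      σ (genB k b 1) = b⁻¹ • genB k b 0 ∧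
      σ (genB k b 2) = genB k b 2 := by
  exact auto_of_B' b hb
end
end

section
/- For b ∈ k^×, the element y := x_3x_1 - b^2 x_2x_3 is a normal element of the algebra ℬ(b) = k⟨x_1,x_2,x_3⟩/(x_2x_1 + x_1x_2, x_3x_2 + b^{-1}x_3x_1 - x_1x_3 - b x_2x_3, x_3^2x_1 - b^2 x_1x_3^2, x_3x_1^2 + b^3 x_1x_2x_3 - b x_1x_3x_1 - b^2 x_2x_3x_1). -/
noncomputable section

open FreeAlgebra

variable (k : Type) [Field k]

/-- for `b ≠ 0`, the element `y = x₃x₁ - b² x₂x₃` is normal in `ℬ(b)`. -/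
theorem normal_elem_in_B (b : k) (hb : b ≠ 0) :
    IsNormalElem (genB k b 2 * genB k b 0 - b ^ 2 • (genB k b 1 * genB k b 2)) := by
  set g : Fin 3 → AlgB k b := genB k b with hg
  set y : AlgB k b := g 2 * g 0 - b ^ 2 • (g 1 * g 2) with hy
  have h1 : g 1 * g 0 = -(g 0 * g 1) := by
    simpa only [map_mul, map_neg] using RingQuot.mkAlgHom_rel k (relB.r1 (b := b))
  have h2 : g 2 * g 1 =
      -b⁻¹ • (g 2 * g 0) + g 0 * g 2 + b • (g 1 * g 2) := by
    simpa only [map_mul, map_neg, map_add, map_smul] using RingQuot.mkAlgHom_rel k (relB.r2 (b := b))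
  have h3 : g 2 * g 2 * g 0 = b ^ 2 • (g 0 * (g 2 * g 2)) := by
    simpa only [map_mul, map_smul] using RingQuot.mkAlgHom_rel k (relB.r3 (b := b))
  have h4 : g 2 * (g 0 * g 0) =
      -(b ^ 3) • (g 0 * g 1 * g 2) + b • (g 0 * g 2 * g 0)
      + b ^ 2 • (g 1 * g 2 * g 0) := by
    simpa only [map_mul, map_neg, map_add, map_smul] using RingQuot.mkAlgHom_rel k (relB.r4 (b := b))
  -- differences equal to zero
  have hD1 : g 1 * g 0 + g 0 * g 1 = 0 := by rw [h1, neg_add_cancel]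
  have hD2 : b • (g 2 * g 1) + g 2 * g 0 - b • (g 0 * g 2) - b ^ 2 • (g 1 * g 2) = 0 := by
    rw [h2]
    simp only [smul_add, neg_smul, smul_neg, mul_neg, neg_mul, smul_smul, mul_inv_cancel₀ hb, one_smul]
    module
  have hD3 : g 2 * g 2 * g 0 - b ^ 2 • (g 0 * (g 2 * g 2)) = 0 := by
    rw [h3, sub_self]
  have hD4 : g 2 * (g 0 * g 0) + b ^ 3 • (g 0 * g 1 * g 2) - b • (g 0 * g 2 * g 0)
      - b ^ 2 • (g 1 * g 2 * g 0) = 0 := by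
    rw [h4]; module
  -- key commutation identities
  have K0 : y * g 0 = b • (g 0 * y) := by
    have e : y * g 0 - b • (g 0 * y) =
        g 2 * (g 0 * g 0) + b ^ 3 • (g 0 * g 1 * g 2) - b • (g 0 * g 2 * g 0)
        - b ^ 2 • (g 1 * g 2 * g 0) := by
      rw [hy]
      simp only [sub_mul, mul_sub, add_mul, mul_add, neg_mul, mul_neg, smul_mul_assoc,
        mul_smul_comm, smul_smul, smul_add, smul_sub, smul_neg, mul_assoc]
      module
    rw [hD4] at e
    exact sub_eq_zero.mp e
  have K2 : g 2 * y = b • (y * g 2) := by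
    have e : b • (y * g 2) - g 2 * y =
        -(g 2 * g 2 * g 0 - b ^ 2 • (g 0 * (g 2 * g 2)))
        + b • ((b • (g 2 * g 1) + g 2 * g 0 - b • (g 0 * g 2) - b ^ 2 • (g 1 * g 2)) * g 2) := by
      rw [hy]
      simp only [sub_mul, mul_sub, add_mul, mul_add, neg_mul, mul_neg, smul_mul_assoc,
        mul_smul_comm, smul_smul, smul_add, smul_sub, smul_neg, mul_assoc]
      module
    rw [hD2, hD3] at e
    simp only [neg_zero, zero_mul, smul_zero, add_zero] at e
    exact (sub_eq_zero.mp e).symm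
  have K1 : y * g 1 = b • (g 1 * y) := by
    have e : b • (y * g 1) - b ^ 2 • (g 1 * y) =
        b • (g 2 * (g 1 * g 0 + g 0 * g 1))
        - (b • (g 2 * g 1) + g 2 * g 0 - b • (g 0 * g 2) - b ^ 2 • (g 1 * g 2)) * g 0
        + (g 2 * (g 0 * g 0) + b ^ 3 • (g 0 * g 1 * g 2) - b • (g 0 * g 2 * g 0)
            - b ^ 2 • (g 1 * g 2 * g 0))
        - b ^ 2 • (g 1 * (b • (g 2 * g 1) + g 2 * g 0 - b • (g 0 * g 2) - b ^ 2 • (g 1 * g 2)))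
        - b ^ 3 • ((g 1 * g 0 + g 0 * g 1) * g 2) := by
      rw [hy]
      simp only [sub_mul, mul_sub, add_mul, mul_add, neg_mul, mul_neg, smul_mul_assoc,
        mul_smul_comm, smul_smul, smul_add, smul_sub, smul_neg, mul_assoc]
      module
    rw [hD1, hD2, hD4] at e
    simp only [mul_zero, zero_mul, smul_zero, sub_zero, add_zero, zero_add] at e
    have e2 : b • (y * g 1) = b • (b • (g 1 * y)) := by
      rw [smul_smul, ← pow_two]; exact sub_eq_zero.mp e
    have e3 := congrArg (fun z => b⁻¹ • z) e2
    simp only [smul_smul] at e3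
    rw [inv_mul_cancel₀ hb, one_smul, ← mul_assoc, inv_mul_cancel₀ hb, one_mul] at e3
    exact e3
  -- reversed identities
  have K0' : g 0 * y = b⁻¹ • (y * g 0) := by rw [K0, smul_smul, inv_mul_cancel₀ hb, one_smul]
  have K1' : g 1 * y = b⁻¹ • (y * g 1) := by rw [K1, smul_smul, inv_mul_cancel₀ hb, one_smul]
  have K2' : y * g 2 = b⁻¹ • (g 2 * y) := by rw [K2, smul_smul, inv_mul_cancel₀ hb, one_smul]
  -- main induction
  have main : ∀ a : AlgB k b, (∃ c, y * a = c * y) ∧ (∃ c, a * y = y * c) := by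
    intro a
    obtain ⟨p, rfl⟩ := RingQuot.mkAlgHom_surjective k (relB k b) a
    induction p using FreeAlgebra.induction with
    | grade0 r =>
        rw [AlgHom.commutes]
        exact ⟨⟨algebraMap k _ r, (Algebra.commutes r y).symm⟩,
          ⟨algebraMap k _ r, Algebra.commutes r y⟩⟩
    | grade1 i =>
        have hgi : RingQuot.mkAlgHom k (relB k b) (FreeAlgebra.ι k i) = g i := rfl
        rw [hgi]
        fin_cases i
        · exact ⟨⟨b • g 0, by show y * g 0 = b • g 0 * y; rw [K0, smul_mul_assoc]⟩,
            ⟨b⁻¹ • g 0, by show g 0 * y = y * b⁻¹ • g 0; rw [K0', mul_smul_comm]⟩⟩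
        · exact ⟨⟨b • g 1, by show y * g 1 = b • g 1 * y; rw [K1, smul_mul_assoc]⟩,
            ⟨b⁻¹ • g 1, by show g 1 * y = y * b⁻¹ • g 1; rw [K1', mul_smul_comm]⟩⟩
        · exact ⟨⟨b⁻¹ • g 2, by show y * g 2 = b⁻¹ • g 2 * y; rw [K2', smul_mul_assoc]⟩,
            ⟨b • g 2, by show g 2 * y = y * b • g 2; rw [K2, mul_smul_comm]⟩⟩
    | mul p q ihp ihq =>
        obtain ⟨⟨cp, hcp⟩, ⟨cp', hcp'⟩⟩ := ihp
        obtain ⟨⟨cq, hcq⟩, ⟨cq', hcq'⟩⟩ := ihq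
        rw [map_mul]
        constructor
        · exact ⟨cp * cq, by rw [← mul_assoc, hcp, mul_assoc, hcq, ← mul_assoc]⟩
        · exact ⟨cp' * cq', by rw [mul_assoc, hcq', ← mul_assoc, hcp', mul_assoc]⟩
    | add p q ihp ihq =>
        obtain ⟨⟨cp, hcp⟩, ⟨cp', hcp'⟩⟩ := ihp
        obtain ⟨⟨cq, hcq⟩, ⟨cq', hcq'⟩⟩ := ihq
        rw [map_add]
        constructor
        · exact ⟨cp + cq, by rw [mul_add, hcp, hcq, add_mul]⟩
        · exact ⟨cp' + cq', by rw [add_mul, hcp', hcq', mul_add]⟩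
  exact ⟨fun a => (main a).1, fun a => (main a).2⟩
end
end

section
/- For b ∈ k^×, the element y := x_3x_1 - b x_1x_3 is a normal element of the algebra 𝒞(b) = k⟨x_1,x_2,x_3⟩/(x_2x_1 + x_1x_2, x_3x_2 + b^{-1}x_3x_1 - x_1x_3 - b x_2x_3, x_3^2x_1 - b^2 x_1x_3^2, x_3x_1^2 - b^3 x_1x_2x_3 - b x_1x_3x_1 - b^2 x_2x_3x_1). -/
noncomputable section

open FreeAlgebra

variable (k : Type) [Field k]

inductive relC (b : k) : FreeAlgebra k (Fin 3) → FreeAlgebra k (Fin 3) → Prop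
  | r1 : relC b (X k 1 * X k 0)
      (-(X k 0 * X k 1))
  | r2 : relC b (X k 2 * X k 1)
      (-b⁻¹ • (X k 2 * X k 0) + X k 0 * X k 2 + b • (X k 1 * X k 2))
  | r3 : relC b (X k 2 * X k 2 * X k 0)
      (b ^ 2 • (X k 0 * (X k 2 * X k 2)))
  | r4 : relC b (X k 2 * (X k 0 * X k 0))
      (b ^ 3 • (X k 0 * X k 1 * X k 2) + b • (X k 0 * X k 2 * X k 0) + b ^ 2 • (X k 1 * X k 2 * X k 0))

/-- The algebra `𝒞(b)`. -/
abbrev AlgC (b : k) := RingQuot (relC k b)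

/-- The images of the generators in `𝒞(b)`. -/
abbrev genC (b : k) (i : Fin 3) : AlgC k b := RingQuot.mkAlgHom k (relC k b) (X k i)

section lemmas
variable (b : k)

local notation "a₁" => genC k b 0
local notation "a₂" => genC k b 1
local notation "a₃" => genC k b 2

lemma R1 : a₂ * a₁ = -(a₁ * a₂) := by
  have := RingQuot.mkAlgHom_rel k (relC.r1 (k := k) (b := b))
  simpa using this

lemma R2 : a₃ * a₂ = -(b⁻¹ • (a₃ * a₁)) + a₁ * a₃ + b • (a₂ * a₃) := by
  have := RingQuot.mkAlgHom_rel k (relC.r2 (k := k) (b := b))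
  simpa [neg_smul] using this

lemma R3 : a₃ * a₃ * a₁ = b ^ 2 • (a₁ * (a₃ * a₃)) := by
  have := RingQuot.mkAlgHom_rel k (relC.r3 (k := k) (b := b))
  simpa using this

lemma R4 : a₃ * (a₁ * a₁) = b ^ 3 • (a₁ * a₂ * a₃) + b • (a₁ * a₃ * a₁) + b ^ 2 • (a₂ * a₃ * a₁) := by
  have := RingQuot.mkAlgHom_rel k (relC.r4 (k := k) (b := b))
  simpa using this



-- helper lemmas elaborated with the ambient instances
lemma mn (x y : AlgC k b) : x * -y = -(x * y) := mul_neg x y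
lemma nm (x y : AlgC k b) : -x * y = -(x * y) := neg_mul x y
lemma nn (x : AlgC k b) : - -x = x := neg_neg x
lemma sn (c : k) (x : AlgC k b) : c • -x = -(c • x) := smul_neg c x
lemma ns (c : k) (x : AlgC k b) : (-c) • x = -(c • x) := neg_smul c x
lemma mns (c : k) (x y : AlgC k b) : x * (c • y) = c • (x * y) := mul_smul_comm c x y
lemma sm (c : k) (x y : AlgC k b) : (c • x) * y = c • (x * y) := smul_mul_assoc c x y
lemma ss (c d : k) (x : AlgC k b) : c • d • x = (c * d) • x := smul_smul c d x

-- convenient right-associated versions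
lemma R1' (z : AlgC k b) : a₂ * (a₁ * z) = -(a₁ * (a₂ * z)) := by
  rw [← mul_assoc, R1, nm, mul_assoc]

lemma R1'' : a₁ * a₂ = -(a₂ * a₁) := by rw [R1, nn]

lemma R3' : a₃ * (a₃ * a₁) = b ^ 2 • (a₁ * (a₃ * a₃)) := by
  rw [← mul_assoc, R3]

lemma R4' : a₃ * (a₁ * a₁)
    = b ^ 3 • (a₁ * (a₂ * a₃)) + b • (a₁ * (a₃ * a₁)) + b ^ 2 • (a₂ * (a₃ * a₁)) := by
  rw [R4, mul_assoc, mul_assoc, mul_assoc]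

variable (hb : b ≠ 0)
include hb

omit hb in
lemma L1 : (a₃ * a₁ - b • (a₁ * a₃)) * a₁ = b ^ 2 • (a₂ * (a₃ * a₁ - b • (a₁ * a₃))) := by
  have h : a₂ * (a₁ * a₃) = -(a₁ * (a₂ * a₃)) := R1' k b a₃
  simp only [sub_mul, mul_sub, sm, mns, smul_sub, ss, mul_assoc]
  rw [R4', h]
  simp only [sn, ss]
  module

lemma L3 : (a₃ * a₁ - b • (a₁ * a₃)) * a₃ = (-b⁻¹) • (a₃ * (a₃ * a₁ - b • (a₁ * a₃))) := by
  simp only [sub_mul, mul_sub, sm, mns, smul_sub, ss, mul_assoc, ns]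
  rw [R3']
  rw [show (b⁻¹ • b ^ 2 • (a₁ * (a₃ * a₃)) : AlgC k b) = b • (a₁ * (a₃ * a₃)) by
    rw [ss]; congr 1; field_simp]
  rw [show (-b⁻¹ * b : k) = -1 by field_simp]
  module

lemma key24 : a₃ * (a₁ * a₂) = b ^ 2 • (a₁ * (a₂ * a₃)) := by
  rw [R1'' k b, mn, ← mul_assoc, R2]
  simp only [add_mul, nm, sm, mul_assoc, nn]
  rw [R4']
  simp only [smul_add, ss]
  rw [show b⁻¹ * b ^ 3 = b ^ 2 by field_simp,
      show b⁻¹ * b = 1 by field_simp,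
      show b⁻¹ * b ^ 2 = b by field_simp, one_smul]
  module

lemma L2 : (a₃ * a₁ - b • (a₁ * a₃)) * a₂ = a₁ * (a₃ * a₁ - b • (a₁ * a₃)) := by
  simp only [sub_mul, mul_sub, sm, mns, ss, mul_assoc]
  rw [key24 k b hb, R2]
  simp only [mul_add, mn, mns, smul_add, sn, ss, mul_assoc]
  rw [show b * b⁻¹ = 1 by field_simp, one_smul]
  module

lemma M2 : a₂ * (a₃ * a₁ - b • (a₁ * a₃)) = (a₃ * a₁ - b • (a₁ * a₃)) * ((b ^ 2)⁻¹ • a₁) := by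
  rw [mns, L1 k b, ss, inv_mul_cancel₀ (pow_ne_zero 2 hb), one_smul]

lemma M3 : a₃ * (a₃ * a₁ - b • (a₁ * a₃)) = (a₃ * a₁ - b • (a₁ * a₃)) * ((-b) • a₃) := by
  rw [mns, L3 k b hb, ss, neg_mul_neg, mul_inv_cancel₀ hb, one_smul]

end lemmas

/-- for `b ≠ 0`, the element `y = x₃x₁ - b x₁x₃` is normal in `𝒞(b)`. -/
theorem normal_elem_in_C (b : k) (hb : b ≠ 0) :
    IsNormalElem (genC k b 2 * genC k b 0 - b • (genC k b 0 * genC k b 2)) := by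
  set y : AlgC k b := genC k b 2 * genC k b 0 - b • (genC k b 0 * genC k b 2) with hy
  constructor
  · intro a
    obtain ⟨f, rfl⟩ := RingQuot.mkAlgHom_surjective k (relC k b) a
    induction f using FreeAlgebra.induction with
    | grade0 r =>
        exact ⟨algebraMap k _ r, by rw [AlgHom.commutes, Algebra.commutes]⟩
    | grade1 i =>
        fin_cases i
        · exact ⟨b ^ 2 • genC k b 1, by rw [hy]; rw [sm]; exact L1 k b⟩
        · exact ⟨genC k b 0, by rw [hy]; exact L2 k b hb⟩
        · exact ⟨(-b⁻¹) • genC k b 2, by rw [hy]; rw [sm]; exact L3 k b hb⟩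
    | mul f g hf hg =>
        obtain ⟨cf, hcf⟩ := hf
        obtain ⟨cg, hcg⟩ := hg
        refine ⟨cf * cg, ?_⟩
        rw [map_mul, ← mul_assoc, hcf, mul_assoc, hcg, ← mul_assoc]
    | add f g hf hg =>
        obtain ⟨cf, hcf⟩ := hf
        obtain ⟨cg, hcg⟩ := hg
        exact ⟨cf + cg, by rw [map_add, mul_add, hcf, hcg, add_mul]⟩
  · intro a
    obtain ⟨f, rfl⟩ := RingQuot.mkAlgHom_surjective k (relC k b) a
    induction f using FreeAlgebra.induction with
    | grade0 r =>
        exact ⟨algebraMap k _ r, by rw [AlgHom.commutes, Algebra.commutes]⟩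
    | grade1 i =>
        fin_cases i
        · exact ⟨genC k b 1, by rw [hy]; exact (L2 k b hb).symm⟩
        · exact ⟨(b ^ 2)⁻¹ • genC k b 0, by rw [hy]; rw [mns]; exact (M2 k b hb).trans (mns k b _ _ _)⟩
        · exact ⟨(-b) • genC k b 2, by rw [hy]; rw [mns]; exact (M3 k b hb).trans (mns k b _ _ _)⟩
    | mul f g hf hg =>
        obtain ⟨cf, hcf⟩ := hf
        obtain ⟨cg, hcg⟩ := hg
        refine ⟨cf * cg, ?_⟩
        rw [map_mul, mul_assoc, hcg, ← mul_assoc, hcf, mul_assoc]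
    | add f g hf hg =>
        obtain ⟨cf, hcf⟩ := hf
        obtain ⟨cg, hcg⟩ := hg
        exact ⟨cf + cg, by rw [map_add, add_mul, hcf, hcg, mul_add]⟩
end
end

section
/- Let 𝒟 = 𝒟(1,h) = k⟨x_1,x_2,x_3⟩/(x_2x_1 + x_1x_2, x_3x_2 + x_3x_1 - x_1x_3 - x_2x_3, x_3^2x_1 - x_1x_3^2, x_3x_1^2 - (h-1)x_1^2x_3 - h x_2^2x_3) for h ∈ k. Then the elements x_1^2 + x_2^2 and x_3^2 are central in 𝒟. -/
noncomputable section

open FreeAlgebra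

variable (k : Type) [Field k]

/-- The defining relations of `𝒟(1,h)`. -/
inductive relD (h : k) : FreeAlgebra k (Fin 3) → FreeAlgebra k (Fin 3) → Prop
  | r1 : relD h (X k 1 * X k 0) (-(X k 0 * X k 1))
  | r2 : relD h (X k 2 * X k 1) (-(X k 2 * X k 0) + X k 0 * X k 2 + X k 1 * X k 2)
  | r3 : relD h (X k 2 * X k 2 * X k 0) (X k 0 * (X k 2 * X k 2))
  | r4 : relD h (X k 2 * (X k 0 * X k 0))
      ((h - 1) • (X k 0 * X k 0 * X k 2) + h • (X k 1 * (X k 1 * X k 2)))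

/-- The algebra `𝒟(1,h)`. -/
abbrev AlgD (h : k) := RingQuot (relD k h)

/-- The images of the generators in `𝒟(1,h)`. -/
abbrev genD (h : k) (i : Fin 3) : AlgD k h := RingQuot.mkAlgHom k (relD k h) (X k i)

section GenericRing

variable {A : Type} [Ring A] (a b c : A)

theorem aux_bba (r1 : b * a = -(a * b)) : b * b * a = a * (b * b) := by
  calc b * b * a = b * (b * a) := by rw [mul_assoc]
  _ = b * (-(a * b)) := by rw [r1]
  _ = -((b * a) * b) := by simp [mul_assoc]
  _ = -((-(a * b)) * b) := by rw [r1]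
  _ = a * (b * b) := by simp [mul_assoc]

theorem aux_aab (r1 : b * a = -(a * b)) : a * a * b = b * (a * a) := by
  have r1' : a * b = -(b * a) := by rw [r1, neg_neg]
  calc a * a * b = a * (a * b) := by rw [mul_assoc]
  _ = a * (-(b * a)) := by rw [r1']
  _ = -((a * b) * a) := by simp [mul_assoc]
  _ = -((-(b * a)) * a) := by rw [r1']
  _ = b * (a * a) := by simp [mul_assoc]

theorem aux_cab (r1 : b * a = -(a * b))
    (r2 : c * b = -(c * a) + a * c + b * c) :
    c * (a * b) = c * (a * a) - a * (c * a) - b * (c * a) + c * (a * a) - c * (a * a) := by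
  have r1' : a * b = -(b * a) := by rw [r1, neg_neg]
  calc c * (a * b) = -((c * b) * a) := by rw [r1']; simp [mul_assoc]
  _ = -((-(c * a) + a * c + b * c) * a) := by rw [r2]
  _ = _ := by simp only [add_mul, neg_mul, neg_add_rev, neg_neg, mul_assoc]; abel

theorem aux_cbb (r1 : b * a = -(a * b))
    (r2 : c * b = -(c * a) + a * c + b * c) :
    c * (b * b) = -(c * (a * a)) + a * a * c + b * b * c := by
  have e3 := aux_cab a b c r1 r2
  have hbac : b * (a * c) = -(a * (b * c)) := by
    calc b * (a * c) = (b * a) * c := by rw [mul_assoc]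
    _ = (-(a * b)) * c := by rw [r1]
    _ = -(a * (b * c)) := by simp [mul_assoc]
  have step1 : c * (b * b) = -(c * (a * b)) + a * (c * b) + b * (c * b) := by
    calc c * (b * b) = (c * b) * b := by rw [mul_assoc]
    _ = (-(c * a) + a * c + b * c) * b := by rw [r2]
    _ = _ := by simp only [add_mul, neg_mul, mul_assoc]
  rw [step1, e3, r2]
  simp only [mul_add, mul_neg, mul_assoc]
  rw [hbac]
  try simp only [mul_assoc]
  abel

theorem aux_ccb (r2 : c * b = -(c * a) + a * c + b * c)
    (r3 : c * c * a = a * (c * c)) : c * c * b = b * (c * c) := by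
  calc c * c * b = c * (c * b) := by rw [mul_assoc]
  _ = c * (-(c * a) + a * c + b * c) := by rw [r2]
  _ = -(c * c * a) + (c * a) * c + (c * b) * c := by
      simp only [mul_add, mul_neg, mul_assoc]
  _ = -(a * (c * c)) + (c * a) * c + (-(c * a) + a * c + b * c) * c := by rw [r3, r2]
  _ = b * (c * c) := by simp only [add_mul, neg_mul, mul_assoc]; abel

theorem aux_zc (r1 : b * a = -(a * b))
    (r2 : c * b = -(c * a) + a * c + b * c) :
    (a * a + b * b) * c = c * (a * a + b * b) := by
  rw [mul_add, aux_cbb a b c r1 r2, add_mul]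
  abel

theorem aux_za (r1 : b * a = -(a * b)) :
    (a * a + b * b) * a = a * (a * a + b * b) := by
  rw [add_mul, mul_add, aux_bba a b r1, mul_assoc]

theorem aux_zb (r1 : b * a = -(a * b)) :
    (a * a + b * b) * b = b * (a * a + b * b) := by
  rw [add_mul, mul_add, aux_aab a b r1, mul_assoc]

end GenericRing

/-- If an element commutes with each generator, then it is central. -/
theorem central_of_comm_gens (h : k) (z : AlgD k h)
    (hz : ∀ i, z * genD k h i = genD k h i * z) :
    ∀ u : AlgD k h, z * u = u * z := by
  intro u
  obtain ⟨p, rfl⟩ := RingQuot.mkAlgHom_surjective k (relD k h) u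
  induction p using FreeAlgebra.induction with
  | grade0 r =>
      rw [AlgHom.commutes]
      exact (Algebra.commutes r z).symm
  | grade1 i => exact hz i
  | mul x y hx hy =>
      rw [map_mul, ← mul_assoc, hx, mul_assoc, hy, mul_assoc]
  | add x y hx hy =>
      rw [map_add, mul_add, add_mul, hx, hy]

/-- the elements `x₁² + x₂²` and `x₃²` are central in `𝒟(1,h)`. -/
theorem central_elems_in_D (h : k) :
    (∀ u : AlgD k h,
      (genD k h 0 * genD k h 0 + genD k h 1 * genD k h 1) * u =
        u * (genD k h 0 * genD k h 0 + genD k h 1 * genD k h 1)) ∧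
    (∀ u : AlgD k h, (genD k h 2 * genD k h 2) * u = u * (genD k h 2 * genD k h 2)) := by
  set a := genD k h 0 with ha
  set b := genD k h 1 with hb
  set c := genD k h 2 with hc
  have r1 : b * a = -(a * b) := by
    have := RingQuot.mkAlgHom_rel k (relD.r1 (k := k) (h := h))
    simpa [map_mul, map_neg] using this
  have r2 : c * b = -(c * a) + a * c + b * c := by
    have := RingQuot.mkAlgHom_rel k (relD.r2 (k := k) (h := h))
    simpa [map_mul, map_neg, map_add] using this
  have r3 : c * c * a = a * (c * c) := by
    have := RingQuot.mkAlgHom_rel k (relD.r3 (k := k) (h := h))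
    simpa [map_mul] using this
  constructor
  · apply central_of_comm_gens
    intro i
    fin_cases i
    · exact aux_za a b r1
    · exact aux_zb a b r1
    · exact aux_zc a b c r1 r2
  · apply central_of_comm_gens
    intro i
    fin_cases i
    · exact r3
    · exact aux_ccb a b c r2 r3
    · exact mul_assoc c c c
end
end

section
/- Let ℰ = ℰ(1,γ) = k⟨x_1,x_2,x_3⟩/(x_2x_1 + x_1x_2, x_3x_2 + x_3x_1 - x_1x_3 - x_2x_3, x_3^2x_1 - x_2x_3^2, x_3x_1^2 - γ x_1x_2x_3 - x_1x_3x_1 - x_2x_3x_1) with γ^2 = -1. Then x_1x_2, x_3^2, and x_1^2 + x_2^2 are normal elements of ℰ. -/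
noncomputable section

open FreeAlgebra

variable (k : Type) [Field k]

/-- The defining relations of `ℰ(1,γ)` (with `γ² = -1`). -/
inductive relE (g : k) : FreeAlgebra k (Fin 3) → FreeAlgebra k (Fin 3) → Prop
  | r1 : relE g (X k 1 * X k 0) (-(X k 0 * X k 1))
  | r2 : relE g (X k 2 * X k 1) (-(X k 2 * X k 0) + X k 0 * X k 2 + X k 1 * X k 2)
  | r3 : relE g (X k 2 * X k 2 * X k 0) (X k 1 * (X k 2 * X k 2))
  | r4 : relE g (X k 2 * (X k 0 * X k 0))
      (g • (X k 0 * X k 1 * X k 2) + X k 0 * X k 2 * X k 0 + X k 1 * X k 2 * X k 0)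

/-- The algebra `ℰ(1,γ)`. -/
abbrev AlgE (g : k) := RingQuot (relE k g)

/-- The images of the generators in `ℰ(1,γ)`. -/
abbrev genE (g : k) (i : Fin 3) : AlgE k g := RingQuot.mkAlgHom k (relE k g) (X k i)

section Aux

variable {k}

/-- Abstract computation of all commutation identities from the relations. -/
theorem mainAux {A : Type*} [Ring A] (a b c G : A)
    (hG : ∀ x : A, G * x = x * G)
    (hGG : G * G = -1)
    (h1 : b * a = -(a * b))
    (h2 : c * b = -(c * a) + a * c + b * c)
    (h3 : c * c * a = b * (c * c))
    (h4 : c * (a * a) = G * (a * b * c) + a * c * a + b * c * a) :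
    ((a * b) * a = (-a) * (a * b)) ∧
    ((a * b) * b = (-b) * (a * b)) ∧
    ((a * b) * c = (-(G * c)) * (a * b)) ∧
    (a * (a * b) = (a * b) * (-a)) ∧
    (b * (a * b) = (a * b) * (-b)) ∧
    (c * (a * b) = (a * b) * (G * c)) ∧
    ((c * c) * b = a * (c * c)) ∧
    ((a * a + b * b) * a = a * (a * a + b * b)) ∧
    ((a * a + b * b) * b = b * (a * a + b * b)) ∧
    ((a * a + b * b) * c = c * (a * a + b * b)) := by
  -- key1 : c(ab) = G·a(bc)
  have e1 : c * (b * a) = -(c * (a * b)) := by rw [h1]; noncomm_ring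
  have e2 : c * (b * a) = -(G * (a * (b * c))) := by
    calc c * (b * a) = (c * b) * a := by noncomm_ring
      _ = (-(c * a) + a * c + b * c) * a := by rw [h2]
      _ = -(c * (a * a)) + a * (c * a) + b * (c * a) := by noncomm_ring
      _ = -(G * (a * b * c) + a * c * a + b * c * a) + a * (c * a) + b * (c * a) := by
            rw [h4]
      _ = -(G * (a * (b * c))) := by noncomm_ring
  have key1 : c * (a * b) = G * (a * (b * c)) := neg_injective (e1.symm.trans e2)
  -- key2 : (cc)b = a(cc)
  have key2 : (c * c) * b = a * (c * c) := by
    calc (c * c) * b = c * (c * b) := by noncomm_ring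
      _ = c * (-(c * a) + a * c + b * c) := by rw [h2]
      _ = -((c * c) * a) + (c * a) * c + (c * b) * c := by noncomm_ring
      _ = -((c * c) * a) + (c * a) * c + (-(c * a) + a * c + b * c) * c := by rw [h2]
      _ = -(c * c * a) + a * (c * c) + b * (c * c) := by noncomm_ring
      _ = -(b * (c * c)) + a * (c * c) + b * (c * c) := by rw [h3]
      _ = a * (c * c) := by abel
  -- e0 : b(ac) = -(a(bc))
  have e0 : b * (a * c) = -(a * (b * c)) := by
    calc b * (a * c) = (b * a) * c := by noncomm_ring
      _ = (-(a * b)) * c := by rw [h1]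
      _ = -(a * (b * c)) := by noncomm_ring
  -- ebb : expansion of c(bb)
  have ebb : c * (b * b)
      = -(G * (a * (b * c))) - a * (c * a) + (a * a) * c - b * (c * a) + (b * b) * c := by
    calc c * (b * b) = (c * b) * b := by noncomm_ring
      _ = (-(c * a) + a * c + b * c) * b := by rw [h2]
      _ = -(c * (a * b)) + a * (c * b) + b * (c * b) := by noncomm_ring
      _ = -(G * (a * (b * c))) + a * (-(c * a) + a * c + b * c)
            + b * (-(c * a) + a * c + b * c) := by rw [key1, h2]
      _ = -(G * (a * (b * c))) - a * (c * a) + (a * a) * c + a * (b * c)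
            - b * (c * a) + b * (a * c) + (b * b) * c := by noncomm_ring
      _ = -(G * (a * (b * c))) - a * (c * a) + (a * a) * c + a * (b * c)
            - b * (c * a) + -(a * (b * c)) + (b * b) * c := by rw [e0]
      _ = -(G * (a * (b * c))) - a * (c * a) + (a * a) * c - b * (c * a) + (b * b) * c := by
            abel
  -- key3 : c(aa) + c(bb) = (aa)c + (bb)c
  have key3 : c * (a * a) + c * (b * b) = (a * a) * c + (b * b) * c := by
    calc c * (a * a) + c * (b * b)
        = (G * (a * b * c) + a * c * a + b * c * a)
          + (-(G * (a * (b * c))) - a * (c * a) + (a * a) * c - b * (c * a) + (b * b) * c) := by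
          rw [h4, ebb]
      _ = (a * a) * c + (b * b) * c := by noncomm_ring
  refine ⟨?_, ?_, ?_, ?_, ?_, ?_, key2, ?_, ?_, ?_⟩
  · calc (a * b) * a = a * (b * a) := by noncomm_ring
      _ = a * (-(a * b)) := by rw [h1]
      _ = (-a) * (a * b) := by noncomm_ring
  · calc (a * b) * b = (-(-(a * b))) * b := by noncomm_ring
      _ = (-(b * a)) * b := by rw [h1]
      _ = (-b) * (a * b) := by noncomm_ring
  · calc (a * b) * c = -((-1 : A) * (a * (b * c))) := by noncomm_ring
      _ = -((G * G) * (a * (b * c))) := by rw [hGG]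
      _ = -(G * (G * (a * (b * c)))) := by noncomm_ring
      _ = -(G * (c * (a * b))) := by rw [key1]
      _ = (-(G * c)) * (a * b) := by noncomm_ring
  · calc a * (a * b) = -(a * (-(a * b))) := by noncomm_ring
      _ = -(a * (b * a)) := by rw [h1]
      _ = (a * b) * (-a) := by noncomm_ring
  · calc b * (a * b) = (b * a) * b := by noncomm_ring
      _ = (-(a * b)) * b := by rw [h1]
      _ = (a * b) * (-b) := by noncomm_ring
  · calc c * (a * b) = G * (a * (b * c)) := key1
      _ = (G * (a * b)) * c := by noncomm_ring
      _ = ((a * b) * G) * c := by rw [hG]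
      _ = (a * b) * (G * c) := by noncomm_ring
  · -- (aa+bb) a = a (aa+bb)
    have eA : b * (b * a) = a * (b * b) := by
      calc b * (b * a) = b * (-(a * b)) := by rw [h1]
        _ = -((b * a) * b) := by noncomm_ring
        _ = -((-(a * b)) * b) := by rw [h1]
        _ = a * (b * b) := by noncomm_ring
    calc (a * a + b * b) * a = a * (a * a) + b * (b * a) := by noncomm_ring
      _ = a * (a * a) + a * (b * b) := by rw [eA]
      _ = a * (a * a + b * b) := by noncomm_ring
  · -- (aa+bb) b = b (aa+bb)
    have eB : b * (a * a) = (a * a) * b := by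
      calc b * (a * a) = (b * a) * a := by noncomm_ring
        _ = (-(a * b)) * a := by rw [h1]
        _ = -(a * (b * a)) := by noncomm_ring
        _ = -(a * (-(a * b))) := by rw [h1]
        _ = (a * a) * b := by noncomm_ring
    calc (a * a + b * b) * b = b * (a * a) + (b * b) * b := by rw [eB]; noncomm_ring
      _ = b * (a * a + b * b) := by noncomm_ring
  · calc (a * a + b * b) * c = (a * a) * c + (b * b) * c := by noncomm_ring
      _ = c * (a * a) + c * (b * b) := key3.symm
      _ = c * (a * a + b * b) := by noncomm_ring

/-- Normality can be checked on the generators. -/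
theorem normal_of_gens (g : k) (y : AlgE k g)
    (hL : ∀ i : Fin 3, ∃ b, y * genE k g i = b * y)
    (hR : ∀ i : Fin 3, ∃ b, genE k g i * y = y * b) :
    IsNormalElem y := by
  constructor
  · intro x
    obtain ⟨p, rfl⟩ := RingQuot.mkAlgHom_surjective k (relE k g) x
    induction p using FreeAlgebra.induction with
    | grade0 r =>
        exact ⟨algebraMap k _ r, by rw [AlgHom.commutes]; exact (Algebra.commutes r y).symm⟩
    | grade1 i => exact hL i
    | mul p q hp hq =>
        obtain ⟨bp, hbp⟩ := hp
        obtain ⟨bq, hbq⟩ := hq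
        exact ⟨bp * bq, by rw [map_mul, ← mul_assoc, hbp, mul_assoc, hbq, ← mul_assoc]⟩
    | add p q hp hq =>
        obtain ⟨bp, hbp⟩ := hp
        obtain ⟨bq, hbq⟩ := hq
        exact ⟨bp + bq, by rw [map_add, mul_add, hbp, hbq, add_mul]⟩
  · intro x
    obtain ⟨p, rfl⟩ := RingQuot.mkAlgHom_surjective k (relE k g) x
    induction p using FreeAlgebra.induction with
    | grade0 r =>
        exact ⟨algebraMap k _ r, by rw [AlgHom.commutes]; exact Algebra.commutes r y⟩
    | grade1 i => exact hR i
    | mul p q hp hq =>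
        obtain ⟨bp, hbp⟩ := hp
        obtain ⟨bq, hbq⟩ := hq
        exact ⟨bp * bq, by rw [map_mul, mul_assoc, hbq, ← mul_assoc, hbp, mul_assoc]⟩
    | add p q hp hq =>
        obtain ⟨bp, hbp⟩ := hp
        obtain ⟨bq, hbq⟩ := hq
        exact ⟨bp + bq, by rw [map_add, add_mul, hbp, hbq, mul_add]⟩

end Aux

/-- in `ℰ = ℰ(1,γ)` with `γ² = -1`, the elements `x₁x₂`, `x₃²` and
`x₁² + x₂²` are all normal. -/
theorem normal_elems_in_E (g : k) (hg : g ^ 2 = -1) :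
    IsNormalElem (genE k g 0 * genE k g 1) ∧
    IsNormalElem (genE k g 2 * genE k g 2) ∧
    IsNormalElem (genE k g 0 * genE k g 0 + genE k g 1 * genE k g 1) := by
  set a : AlgE k g := genE k g 0 with ha
  set b : AlgE k g := genE k g 1 with hb
  set c : AlgE k g := genE k g 2 with hc
  set G : AlgE k g := algebraMap k (AlgE k g) g with hGdef
  have hG : ∀ x : AlgE k g, G * x = x * G := fun x => Algebra.commutes g x
  have hGG : G * G = -1 := by
    rw [hGdef, ← map_mul, ← pow_two, hg, map_neg, map_one]
  have h1 : b * a = -(a * b) := by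
    simpa [ha, hb] using RingQuot.mkAlgHom_rel k (relE.r1 (g := g))
  have h2 : c * b = -(c * a) + a * c + b * c := by
    simpa [ha, hb, hc] using RingQuot.mkAlgHom_rel k (relE.r2 (g := g))
  have h3 : c * c * a = b * (c * c) := by
    simpa [ha, hb, hc] using RingQuot.mkAlgHom_rel k (relE.r3 (g := g))
  have h4 : c * (a * a) = G * (a * b * c) + a * c * a + b * c * a := by
    have := RingQuot.mkAlgHom_rel k (relE.r4 (g := g))
    simpa [ha, hb, hc, hGdef, Algebra.smul_def] using this
  obtain ⟨i1, i2, i3, i4, i5, i6, i7, i8, i9, i10⟩ :=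
    mainAux a b c G hG hGG h1 h2 h3 h4
  refine ⟨?_, ?_, ?_⟩
  · refine normal_of_gens g _ ?_ ?_
    · intro i
      fin_cases i
      · exact ⟨-a, i1⟩
      · exact ⟨-b, i2⟩
      · exact ⟨-(G * c), i3⟩
    · intro i
      fin_cases i
      · exact ⟨-a, i4⟩
      · exact ⟨-b, i5⟩
      · exact ⟨G * c, i6⟩
  · refine normal_of_gens g _ ?_ ?_
    · intro i
      fin_cases i
      · exact ⟨b, h3⟩
      · exact ⟨a, i7⟩
      · exact ⟨c, mul_assoc c c c⟩
    · intro i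
      fin_cases i
      · exact ⟨b, i7.symm⟩
      · exact ⟨a, h3.symm⟩
      · exact ⟨c, (mul_assoc c c c).symm⟩
  · refine normal_of_gens g _ ?_ ?_
    · intro i
      fin_cases i
      · exact ⟨a, i8⟩
      · exact ⟨b, i9⟩
      · exact ⟨c, i10⟩
    · intro i
      fin_cases i
      · exact ⟨a, i8.symm⟩
      · exact ⟨b, i9.symm⟩
      · exact ⟨c, i10.symm⟩
end
end

section
/- Let ℱ = ℱ(1,γ) = k⟨x_1,x_2,x_3⟩/(x_2x_1 - γ^2 x_1x_2, x_3x_2 + γ x_3x_1 - x_1x_3 - x_2x_3, x_3^2x_1 - γ^2 x_2x_3^2 + x_3x_1x_3, x_3x_1^2 - γ x_1x_2x_3 - γ^2 x_2x_3x_1), where γ is a primitive cube root of unity. Then x_1^3 + x_2^3, x_3^3, and x_1^2x_2 are normal elements of ℱ. -/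
noncomputable section

open FreeAlgebra

variable (k : Type) [Field k]

/-- The defining relations of `ℱ(b,γ)` (`γ` a primitive cube root of unity). -/
inductive relF (b g : k) : FreeAlgebra k (Fin 3) → FreeAlgebra k (Fin 3) → Prop
  | r1 : relF b g (X k 1 * X k 0) (g ^ 2 • (X k 0 * X k 1))
  | r2 : relF b g (X k 2 * X k 1)
      (-(g * b⁻¹) • (X k 2 * X k 0) + X k 0 * X k 2 + b • (X k 1 * X k 2))
  | r3 : relF b g (X k 2 * X k 2 * X k 0)
      ((g ^ 2 * b ^ 3) • (X k 1 * (X k 2 * X k 2)) + (-b) • (X k 2 * X k 0 * X k 2))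
  | r4 : relF b g (X k 2 * (X k 0 * X k 0))
      ((g * b ^ 3) • (X k 0 * X k 1 * X k 2) + (g ^ 2 * b ^ 2) • (X k 1 * X k 2 * X k 0))

/-- The algebra `ℱ(b,γ)`. -/
abbrev AlgF (b g : k) := RingQuot (relF k b g)

/-- The images of the generators in `ℱ(b,γ)`. -/
abbrev genF (b g : k) (i : Fin 3) : AlgF k b g := RingQuot.mkAlgHom k (relF k b g) (X k i)

/-- Normality follows from the corresponding property on generators. -/
lemma isNormal_of_gens {b g : k} (y : AlgF k b g)
    (h1 : ∀ i, ∃ c, y * genF k b g i = c * y)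
    (h2 : ∀ i, ∃ c, genF k b g i * y = y * c) : IsNormalElem y := by
  constructor
  · intro a
    obtain ⟨f, rfl⟩ := RingQuot.mkAlgHom_surjective k (relF k b g) a
    induction f with
    | grade0 r =>
        exact ⟨algebraMap k _ r, by rw [AlgHom.commutes]; exact (Algebra.commutes r y).symm⟩
    | grade1 i => exact h1 i
    | mul p q hp hq =>
        obtain ⟨c, hc⟩ := hp; obtain ⟨d, hd⟩ := hq
        exact ⟨c * d, by rw [map_mul, ← mul_assoc, hc, mul_assoc, hd, ← mul_assoc]⟩
    | add p q hp hq =>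
        obtain ⟨c, hc⟩ := hp; obtain ⟨d, hd⟩ := hq
        exact ⟨c + d, by rw [map_add, mul_add, hc, hd, add_mul]⟩
  · intro a
    obtain ⟨f, rfl⟩ := RingQuot.mkAlgHom_surjective k (relF k b g) a
    induction f with
    | grade0 r =>
        exact ⟨algebraMap k _ r, by rw [AlgHom.commutes]; exact Algebra.commutes r y⟩
    | grade1 i => exact h2 i
    | mul p q hp hq =>
        obtain ⟨c, hc⟩ := hp; obtain ⟨d, hd⟩ := hq
        exact ⟨c * d, by rw [map_mul, mul_assoc, hd, ← mul_assoc, hc, mul_assoc]⟩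
    | add p q hp hq =>
        obtain ⟨c, hc⟩ := hp; obtain ⟨d, hd⟩ := hq
        exact ⟨c + d, by rw [map_add, add_mul, hc, hd, mul_add]⟩

/-- The core noncommutative computations, abstractly. -/
lemma calcF {A : Type} [Ring A] [Algebra k A] {g : k} (hg3 : g ^ 3 = 1)
    (hq : g ^ 2 + g + 1 = 0) (x0 x1 x2 : A)
    (E1 : x1 * x0 = g ^ 2 • (x0 * x1))
    (E2 : x2 * x1 = (-g) • (x2 * x0) + x0 * x2 + x1 * x2)
    (E3 : x2 * x2 * x0 = g ^ 2 • (x1 * (x2 * x2)) - x2 * x0 * x2)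
    (E4 : x2 * (x0 * x0) = g • (x0 * x1 * x2) + g ^ 2 • (x1 * x2 * x0)) :
    ((x0*x0*x0 + x1*x1*x1) * x0 = x0 * (x0*x0*x0 + x1*x1*x1)) ∧
    ((x0*x0*x0 + x1*x1*x1) * x1 = x1 * (x0*x0*x0 + x1*x1*x1)) ∧
    ((x0*x0*x0 + x1*x1*x1) * x2 = x2 * (x0*x0*x0 + x1*x1*x1)) ∧
    (x2*x2*x2 * x0 = g ^ 2 • (x0 * (x2*x2*x2))) ∧
    (x2*x2*x2 * x1 = g ^ 2 • (x1 * (x2*x2*x2))) ∧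
    (x0*x0*x1 * x0 = g ^ 2 • (x0 * (x0*x0*x1))) ∧
    (x0*x0*x1 * x1 = g ^ 2 • (x1 * (x0*x0*x1))) ∧
    (x0*x0*x1 * x2 = x2 * (x0*x0*x1)) := by
  have hg2 : g ^ 2 = -g - 1 := by linear_combination hq
  have p3 : g ^ 3 = 1 := hg3
  have p4 : g ^ 4 = g := by linear_combination g * hg3
  have p5 : g ^ 5 = g ^ 2 := by linear_combination g ^ 2 * hg3
  have p6 : g ^ 6 = 1 := by linear_combination (g ^ 3 + 1) * hg3
  have p7 : g ^ 7 = g := by linear_combination (g ^ 4 + g) * hg3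
  have p8 : g ^ 8 = g ^ 2 := by linear_combination (g ^ 5 + g ^ 2) * hg3
  -- left-associated rule forms and their generalizations
  have R1z : ∀ z : A, z * x1 * x0 = g ^ 2 • (z * x0 * x1) := fun z => by
    rw [mul_assoc, E1, mul_smul_comm, ← mul_assoc]
  have R2z : ∀ z : A, z * x2 * x1 =
      (-g) • (z * x2 * x0) + z * x0 * x2 + z * x1 * x2 := fun z => by
    rw [mul_assoc, E2, mul_add, mul_add, mul_smul_comm, ← mul_assoc, ← mul_assoc, ← mul_assoc]
  have R3l : x2 * x2 * x0 = g ^ 2 • (x1 * x2 * x2) - x2 * x0 * x2 := by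
    rw [E3, ← mul_assoc x1 x2 x2]
  have R3z : ∀ z : A, z * x2 * x2 * x0 =
      g ^ 2 • (z * x1 * x2 * x2) - z * x2 * x0 * x2 := fun z => by
    rw [mul_assoc z x2 x2, mul_assoc, E3, mul_sub, mul_smul_comm]
    simp only [← mul_assoc]
  have R4l : x2 * x0 * x0 = g • (x0 * x1 * x2) + g ^ 2 • (x1 * x2 * x0) := by
    rw [mul_assoc, E4]
  have R4z : ∀ z : A, z * x2 * x0 * x0 =
      g • (z * x0 * x1 * x2) + g ^ 2 • (z * x1 * x2 * x0) := fun z => by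
    rw [mul_assoc (z * x2), mul_assoc, E4, mul_add, mul_smul_comm, mul_smul_comm]
    simp only [← mul_assoc]
  -- the derived rule x2 x0 x1 → g (x0 x2 x0) - x0 x1 x2
  have R5 : x2 * x0 * x1 = g • (x0 * x2 * x0) - x0 * x1 * x2 := by
    have h : g ^ 2 • (x2 * x0 * x1) = (-(g ^ 2)) • (x0 * x1 * x2) + x0 * x2 * x0 := by
      calc g ^ 2 • (x2 * x0 * x1) = x2 * x1 * x0 := (R1z x2).symm
        _ = (-g) • (x2 * x0 * x0) + x0 * x2 * x0 + x1 * x2 * x0 := by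
            rw [E2, add_mul, add_mul, smul_mul_assoc]
        _ = (-g) • (g • (x0 * x1 * x2) + g ^ 2 • (x1 * x2 * x0)) + x0 * x2 * x0
              + x1 * x2 * x0 := by rw [R4l]
        _ = (-(g ^ 2)) • (x0 * x1 * x2) + x0 * x2 * x0 := by
            match_scalars <;>
              first
                | ring1
                | linear_combination (-1 : k) * hg3
                | linear_combination (-g) * hg3
                | linear_combination hg3
                | linear_combination g * hg3
    calc x2 * x0 * x1 = (g * g ^ 2) • (x2 * x0 * x1) := by
          rw [show g * g ^ 2 = 1 by linear_combination hg3, one_smul]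
      _ = g • ((-(g ^ 2)) • (x0 * x1 * x2) + x0 * x2 * x0) := by rw [mul_smul, h]
      _ = g • (x0 * x2 * x0) - x0 * x1 * x2 := by
          match_scalars <;>
            first
              | ring1
              | linear_combination (-1 : k) * hg3
              | linear_combination (-g) * hg3
              | linear_combination hg3
              | linear_combination g * hg3
  have R5z : ∀ z : A, z * x2 * x0 * x1 =
      g • (z * x0 * x2 * x0) - z * x0 * x1 * x2 := fun z => by
    rw [mul_assoc (z * x2), mul_assoc z x2, ← mul_assoc x2 x0 x1, R5, mul_sub, mul_smul_comm]
    simp only [← mul_assoc]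
  refine ⟨?_, ?_, ?_, ?_, ?_, ?_, ?_, ?_⟩ <;>
  · simp only [mul_add, add_mul, smul_add, smul_sub, sub_mul, mul_sub, smul_mul_assoc,
      mul_smul_comm, smul_smul, ← mul_assoc, E1, E2, R1z, R2z, R3l, R3z, R4l, R4z, R5, R5z]
    try match_scalars
    all_goals try ring1
    all_goals (try ring_nf; try simp only [hg2, p3, p4, p5, p6, p7, p8])
    all_goals try ring1
    all_goals (try ring_nf; try simp only [hg2, p3, p4, p5, p6, p7, p8])
    all_goals ring_nf

/-- in `ℱ = ℱ(1,γ)` with `γ` a primitive cube root of unity, the elements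
`x₁³ + x₂³`, `x₃³` and `x₁²x₂` are all normal. -/
theorem normal_elems_in_F (g : k) (hg3 : g ^ 3 = 1) (hg1 : g ≠ 1) :
    IsNormalElem (genF k 1 g 0 * genF k 1 g 0 * genF k 1 g 0 +
      genF k 1 g 1 * genF k 1 g 1 * genF k 1 g 1) ∧
    IsNormalElem (genF k 1 g 2 * genF k 1 g 2 * genF k 1 g 2) ∧
    IsNormalElem (genF k 1 g 0 * genF k 1 g 0 * genF k 1 g 1) := by
  have hq : g ^ 2 + g + 1 = 0 := by
    have h : (g - 1) * (g ^ 2 + g + 1) = 0 := by linear_combination hg3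
    rcases mul_eq_zero.mp h with h' | h'
    · exact absurd (by linear_combination h') hg1
    · exact h'
  set x0 := genF k 1 g 0 with hx0
  set x1 := genF k 1 g 1 with hx1
  set x2 := genF k 1 g 2 with hx2
  have E1 : x1 * x0 = g ^ 2 • (x0 * x1) := by
    simpa only [map_mul, map_smul] using
      RingQuot.mkAlgHom_rel k (relF.r1 (k := k) (b := (1 : k)) (g := g))
  have E2 : x2 * x1 = (-g) • (x2 * x0) + x0 * x2 + x1 * x2 := by
    have h := RingQuot.mkAlgHom_rel k (relF.r2 (k := k) (b := (1 : k)) (g := g))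
    simp only [map_mul, map_smul, map_add, map_neg, inv_one, mul_one, one_smul] at h
    exact h
  have E3 : x2 * x2 * x0 = g ^ 2 • (x1 * (x2 * x2)) - x2 * x0 * x2 := by
    have h := RingQuot.mkAlgHom_rel k (relF.r3 (k := k) (b := (1 : k)) (g := g))
    simp only [map_mul, map_smul, map_add, map_neg, one_pow, mul_one, neg_smul, one_smul] at h
    rw [h, ← sub_eq_add_neg]
  have E4 : x2 * (x0 * x0) = g • (x0 * x1 * x2) + g ^ 2 • (x1 * x2 * x0) := by
    simpa only [map_mul, map_smul, map_add, one_pow, mul_one] using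
      RingQuot.mkAlgHom_rel k (relF.r4 (k := k) (b := (1 : k)) (g := g))
  obtain ⟨c1, c2, c3, c4, c5, c7, c8, c9⟩ := calcF k hg3 hq x0 x1 x2 E1 E2 E3 E4
  have hgg : g * g ^ 2 = 1 := by linear_combination hg3
  refine ⟨?_, ?_, ?_⟩
  · apply isNormal_of_gens
    · intro i
      fin_cases i
      · exact ⟨x0, c1⟩
      · exact ⟨x1, c2⟩
      · exact ⟨x2, c3⟩
    · intro i
      fin_cases i
      · exact ⟨x0, c1.symm⟩
      · exact ⟨x1, c2.symm⟩
      · exact ⟨x2, c3.symm⟩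
  · apply isNormal_of_gens
    · intro i
      fin_cases i
      · refine ⟨g ^ 2 • x0, ?_⟩
        show x2*x2*x2*x0 = g ^ 2 • x0 * (x2*x2*x2)
        rw [c4, smul_mul_assoc]
      · refine ⟨g ^ 2 • x1, ?_⟩
        show x2*x2*x2*x1 = g ^ 2 • x1 * (x2*x2*x2)
        rw [c5, smul_mul_assoc]
      · refine ⟨x2, ?_⟩
        show x2*x2*x2*x2 = x2 * (x2*x2*x2)
        simp only [mul_assoc]
    · intro i
      fin_cases i
      · refine ⟨g • x0, ?_⟩
        show x0 * (x2*x2*x2) = x2*x2*x2 * (g • x0)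
        rw [mul_smul_comm, c4, smul_smul, hgg, one_smul]
      · refine ⟨g • x1, ?_⟩
        show x1 * (x2*x2*x2) = x2*x2*x2 * (g • x1)
        rw [mul_smul_comm, c5, smul_smul, hgg, one_smul]
      · refine ⟨x2, ?_⟩
        show x2 * (x2*x2*x2) = x2*x2*x2 * x2
        simp only [mul_assoc]
  · apply isNormal_of_gens
    · intro i
      fin_cases i
      · refine ⟨g ^ 2 • x0, ?_⟩
        show x0*x0*x1*x0 = g ^ 2 • x0 * (x0*x0*x1)
        rw [c7, smul_mul_assoc]
      · refine ⟨g ^ 2 • x1, ?_⟩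
        show x0*x0*x1*x1 = g ^ 2 • x1 * (x0*x0*x1)
        rw [c8, smul_mul_assoc]
      · exact ⟨x2, c9⟩
    · intro i
      fin_cases i
      · refine ⟨g • x0, ?_⟩
        show x0 * (x0*x0*x1) = x0*x0*x1 * (g • x0)
        rw [mul_smul_comm, c7, smul_smul, hgg, one_smul]
      · refine ⟨g • x1, ?_⟩
        show x1 * (x0*x0*x1) = x0*x0*x1 * (g • x1)
        rw [mul_smul_comm, c8, smul_smul, hgg, one_smul]
      · exact ⟨x2, c9.symm⟩
end
end

section
/- For b ∈ k^×, the map x_1 ↦ b x_2, x_2 ↦ γ b^{-1} x_1, x_3 ↦ x_3 extends to a graded k-algebra isomorphism from ℱ(b,γ) to underline-ℱ(γ^2 b, γ^2), where γ is a primitive cube root of unity. -/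
noncomputable section

open FreeAlgebra

variable (k : Type) [Field k]

/-- The defining relations of the algebra `ℱ̲(b,γ)`. -/
inductive relFu (b g : k) : FreeAlgebra k (Fin 3) → FreeAlgebra k (Fin 3) → Prop
  | r1 : relFu b g (X k 1 * X k 0) (g ^ 2 • (X k 0 * X k 1))
  | r2 : relFu b g (X k 2 * X k 1)
      (-(g * b⁻¹) • (X k 2 * X k 0) + X k 0 * X k 2 + b • (X k 1 * X k 2))
  | r3 : relFu b g (X k 2 * X k 2 * X k 0)
      ((g ^ 2 * b ^ 2) • (X k 0 * (X k 2 * X k 2)) + (-(b ^ 3)) • (X k 1 * (X k 2 * X k 2)) +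
        (-b) • (X k 2 * X k 0 * X k 2))
  | r4 : relFu b g (X k 2 * (X k 0 * X k 0))
      ((-(b ^ 4)) • (X k 1 * (X k 1 * X k 2)) + (g ^ 2 * b) • (X k 0 * X k 2 * X k 0) +
        (-(b ^ 2)) • (X k 1 * X k 2 * X k 0))

/-- The algebra `ℱ̲(b,γ)`. -/
abbrev AlgFu (b g : k) := RingQuot (relFu k b g)

/-- The images of the generators in `ℱ̲(b,γ)`. -/
abbrev genFu (b g : k) (i : Fin 3) : AlgFu k b g := RingQuot.mkAlgHom k (relFu k b g) (X k i)


/-- Images of the generators under the forward map. -/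
def fwdGen (b g : k) : Fin 3 → AlgFu k (g ^ 2 * b) (g ^ 2)
  | 0 => b • genFu k (g ^ 2 * b) (g ^ 2) 1
  | 1 => (g * b⁻¹) • genFu k (g ^ 2 * b) (g ^ 2) 0
  | 2 => genFu k (g ^ 2 * b) (g ^ 2) 2

/-- Images of the generators under the backward map. -/
def bwdGen (b g : k) : Fin 3 → AlgF k b g
  | 0 => (g ^ 2 * b) • genF k b g 1
  | 1 => b⁻¹ • genF k b g 0
  | 2 => genF k b g 2

set_option maxHeartbeats 3200000 in
/-- for `b ≠ 0` and `γ` a primitive cube root of unity, the map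
`x₁ ↦ b x₂, x₂ ↦ γ b⁻¹ x₁, x₃ ↦ x₃` extends to a graded algebra isomorphism
`ℱ(b,γ) → ℱ̲(γ²b, γ²)`. -/
theorem iso_F_to_Fu (b g : k) (hb : b ≠ 0) (hg3 : g ^ 3 = 1) (hg1 : g ≠ 1) :
    ∃ σ : AlgF k b g ≃ₐ[k] AlgFu k (g ^ 2 * b) (g ^ 2),
      σ (genF k b g 0) = b • genFu k (g ^ 2 * b) (g ^ 2) 1 ∧
      σ (genF k b g 1) = (g * b⁻¹) • genFu k (g ^ 2 * b) (g ^ 2) 0 ∧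
      σ (genF k b g 2) = genFu k (g ^ 2 * b) (g ^ 2) 2 := by
  -- scalar facts
  have hg0 : g ≠ 0 := by intro h; rw [h] at hg3; norm_num at hg3
  have hgg : g ^ 2 + g + 1 = 0 := by
    have h : (g - 1) * (g ^ 2 + g + 1) = 0 := by linear_combination hg3
    rcases mul_eq_zero.mp h with h1 | h1
    · exact absurd (sub_eq_zero.mp h1) hg1
    · exact h1
  have hg2 : g ^ 2 = -1 - g := by linear_combination hgg
  have hg4 : g ^ 4 = g := by linear_combination g * hg3
  have hg5 : g ^ 5 = -1 - g := by linear_combination g ^ 2 * hg3 + hgg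
  have hg6 : g ^ 6 = 1 := by linear_combination (g ^ 3 + 1) * hg3
  have hg7 : g ^ 7 = g := by linear_combination (g ^ 4 + g) * hg3
  have hg8 : g ^ 8 = -1 - g := by linear_combination (g ^ 5 + g ^ 2) * hg3 + hgg
  have hg9 : g ^ 9 = 1 := by linear_combination (g ^ 6 + g ^ 3 + 1) * hg3
  have hg10 : g ^ 10 = g := by linear_combination (g ^ 7 + g ^ 4 + g) * hg3
  have hg11 : g ^ 11 = -1 - g := by linear_combination (g ^ 8 + g ^ 5 + g ^ 2) * hg3 + hgg
  have hg12 : g ^ 12 = 1 := by linear_combination (g ^ 9 + g ^ 6 + g ^ 3 + 1) * hg3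
  have hb' : g ^ 2 * b ≠ 0 := mul_ne_zero (pow_ne_zero 2 hg0) hb
  -- relations in the target algebra
  have E1 : genFu k (g ^ 2 * b) (g ^ 2) 1 * genFu k (g ^ 2 * b) (g ^ 2) 0 = ((g ^ 2) ^ 2 : k) • (genFu k (g ^ 2 * b) (g ^ 2) 0 * genFu k (g ^ 2 * b) (g ^ 2) 1) := by
    have h := RingQuot.mkAlgHom_rel k (@relFu.r1 k _ (g ^ 2 * b) (g ^ 2))
    simp only [map_mul, map_smul] at h; exact h
  have E2 : genFu k (g ^ 2 * b) (g ^ 2) 2 * genFu k (g ^ 2 * b) (g ^ 2) 1 = (-(g ^ 2 * (g ^ 2 * b)⁻¹)) • (genFu k (g ^ 2 * b) (g ^ 2) 2 * genFu k (g ^ 2 * b) (g ^ 2) 0) + genFu k (g ^ 2 * b) (g ^ 2) 0 * genFu k (g ^ 2 * b) (g ^ 2) 2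
      + (g ^ 2 * b) • (genFu k (g ^ 2 * b) (g ^ 2) 1 * genFu k (g ^ 2 * b) (g ^ 2) 2) := by
    have h := RingQuot.mkAlgHom_rel k (@relFu.r2 k _ (g ^ 2 * b) (g ^ 2))
    simp only [map_mul, map_smul, map_add] at h; exact h
  have E3 : genFu k (g ^ 2 * b) (g ^ 2) 2 * (genFu k (g ^ 2 * b) (g ^ 2) 2 * genFu k (g ^ 2 * b) (g ^ 2) 0) = ((g ^ 2) ^ 2 * (g ^ 2 * b) ^ 2) • (genFu k (g ^ 2 * b) (g ^ 2) 0 * (genFu k (g ^ 2 * b) (g ^ 2) 2 * genFu k (g ^ 2 * b) (g ^ 2) 2))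
      + (-((g ^ 2 * b) ^ 3)) • (genFu k (g ^ 2 * b) (g ^ 2) 1 * (genFu k (g ^ 2 * b) (g ^ 2) 2 * genFu k (g ^ 2 * b) (g ^ 2) 2))
      + (-(g ^ 2 * b)) • (genFu k (g ^ 2 * b) (g ^ 2) 2 * (genFu k (g ^ 2 * b) (g ^ 2) 0 * genFu k (g ^ 2 * b) (g ^ 2) 2)) := by
    have h := RingQuot.mkAlgHom_rel k (@relFu.r3 k _ (g ^ 2 * b) (g ^ 2))
    simp only [map_mul, map_smul, map_add, mul_assoc] at h; exact h
  have E4 : genFu k (g ^ 2 * b) (g ^ 2) 2 * (genFu k (g ^ 2 * b) (g ^ 2) 0 * genFu k (g ^ 2 * b) (g ^ 2) 0) = (-((g ^ 2 * b) ^ 4)) • (genFu k (g ^ 2 * b) (g ^ 2) 1 * (genFu k (g ^ 2 * b) (g ^ 2) 1 * genFu k (g ^ 2 * b) (g ^ 2) 2))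
      + ((g ^ 2) ^ 2 * (g ^ 2 * b)) • (genFu k (g ^ 2 * b) (g ^ 2) 0 * (genFu k (g ^ 2 * b) (g ^ 2) 2 * genFu k (g ^ 2 * b) (g ^ 2) 0))
      + (-((g ^ 2 * b) ^ 2)) • (genFu k (g ^ 2 * b) (g ^ 2) 1 * (genFu k (g ^ 2 * b) (g ^ 2) 2 * genFu k (g ^ 2 * b) (g ^ 2) 0)) := by
    have h := RingQuot.mkAlgHom_rel k (@relFu.r4 k _ (g ^ 2 * b) (g ^ 2))
    simp only [map_mul, map_smul, map_add, mul_assoc] at h; exact h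
  have D1 : genFu k (g ^ 2 * b) (g ^ 2) 2 * (genFu k (g ^ 2 * b) (g ^ 2) 1 * genFu k (g ^ 2 * b) (g ^ 2) 2) = (-(g ^ 2 * (g ^ 2 * b)⁻¹)) • (genFu k (g ^ 2 * b) (g ^ 2) 2 * (genFu k (g ^ 2 * b) (g ^ 2) 0 * genFu k (g ^ 2 * b) (g ^ 2) 2))
      + genFu k (g ^ 2 * b) (g ^ 2) 0 * (genFu k (g ^ 2 * b) (g ^ 2) 2 * genFu k (g ^ 2 * b) (g ^ 2) 2) + (g ^ 2 * b) • (genFu k (g ^ 2 * b) (g ^ 2) 1 * (genFu k (g ^ 2 * b) (g ^ 2) 2 * genFu k (g ^ 2 * b) (g ^ 2) 2)) := by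
    rw [← mul_assoc, E2]; simp only [add_mul, smul_mul_assoc, mul_assoc]
  have D2 : genFu k (g ^ 2 * b) (g ^ 2) 2 * (genFu k (g ^ 2 * b) (g ^ 2) 2 * genFu k (g ^ 2 * b) (g ^ 2) 1) = ((1 + g) * b ^ 2) • (genFu k (g ^ 2 * b) (g ^ 2) 1 * (genFu k (g ^ 2 * b) (g ^ 2) 2 * genFu k (g ^ 2 * b) (g ^ 2) 2))
      + genFu k (g ^ 2 * b) (g ^ 2) 2 * (genFu k (g ^ 2 * b) (g ^ 2) 0 * genFu k (g ^ 2 * b) (g ^ 2) 2) := by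
    rw [E2]; simp only [mul_add, mul_smul_comm]
    rw [E3, D1]; simp only [smul_add, smul_smul]
    match_scalars <;> (try field_simp [hb, hg0, hb']) <;> ring_nf <;> (try simp only [hg2, hg4, hg5, hg6, hg7, hg8, hg9, hg10, hg11, hg12, hg3]) <;> (try ring)
  have D3h : genFu k (g ^ 2 * b) (g ^ 2) 2 * (genFu k (g ^ 2 * b) (g ^ 2) 1 * genFu k (g ^ 2 * b) (g ^ 2) 0) = ((-1 - g) * b ^ 3) • (genFu k (g ^ 2 * b) (g ^ 2) 1 * (genFu k (g ^ 2 * b) (g ^ 2) 1 * genFu k (g ^ 2 * b) (g ^ 2) 2))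
      + (-b) • (genFu k (g ^ 2 * b) (g ^ 2) 1 * (genFu k (g ^ 2 * b) (g ^ 2) 2 * genFu k (g ^ 2 * b) (g ^ 2) 0)) := by
    rw [← mul_assoc, E2]; simp only [add_mul, smul_mul_assoc, mul_assoc]
    rw [E4]; simp only [smul_add, smul_smul]
    match_scalars <;> (try field_simp [hb, hg0, hb']) <;> ring_nf <;> (try simp only [hg2, hg4, hg5, hg6, hg7, hg8, hg9, hg10, hg11, hg12, hg3]) <;> (try ring)
  have E5 : genFu k (g ^ 2 * b) (g ^ 2) 2 * (genFu k (g ^ 2 * b) (g ^ 2) 0 * genFu k (g ^ 2 * b) (g ^ 2) 1) = (g * b ^ 3) • (genFu k (g ^ 2 * b) (g ^ 2) 1 * (genFu k (g ^ 2 * b) (g ^ 2) 1 * genFu k (g ^ 2 * b) (g ^ 2) 2))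
      + ((1 + g) * b) • (genFu k (g ^ 2 * b) (g ^ 2) 1 * (genFu k (g ^ 2 * b) (g ^ 2) 2 * genFu k (g ^ 2 * b) (g ^ 2) 0)) := by
    have key : genFu k (g ^ 2 * b) (g ^ 2) 2 * (genFu k (g ^ 2 * b) (g ^ 2) 1 * genFu k (g ^ 2 * b) (g ^ 2) 0) = ((g ^ 2) ^ 2 : k) • (genFu k (g ^ 2 * b) (g ^ 2) 2 * (genFu k (g ^ 2 * b) (g ^ 2) 0 * genFu k (g ^ 2 * b) (g ^ 2) 1)) := by
      rw [E1, mul_smul_comm]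
    have h6 : (g ^ 2 * (g ^ 2) ^ 2 : k) = 1 := by linear_combination (g ^ 3 + 1) * hg3
    calc genFu k (g ^ 2 * b) (g ^ 2) 2 * (genFu k (g ^ 2 * b) (g ^ 2) 0 * genFu k (g ^ 2 * b) (g ^ 2) 1)
        = (g ^ 2 * (g ^ 2) ^ 2 : k) • (genFu k (g ^ 2 * b) (g ^ 2) 2 * (genFu k (g ^ 2 * b) (g ^ 2) 0 * genFu k (g ^ 2 * b) (g ^ 2) 1)) := by rw [h6, one_smul]
      _ = (g ^ 2 : k) • (((g ^ 2) ^ 2 : k) • (genFu k (g ^ 2 * b) (g ^ 2) 2 * (genFu k (g ^ 2 * b) (g ^ 2) 0 * genFu k (g ^ 2 * b) (g ^ 2) 1))) := by rw [mul_smul]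
      _ = (g ^ 2 : k) • (genFu k (g ^ 2 * b) (g ^ 2) 2 * (genFu k (g ^ 2 * b) (g ^ 2) 1 * genFu k (g ^ 2 * b) (g ^ 2) 0)) := by rw [key]
      _ = _ := by
          rw [D3h]; simp only [smul_add, smul_smul]
          match_scalars <;> (try field_simp [hb, hg0, hb']) <;> ring_nf <;> (try simp only [hg2, hg4, hg5, hg6, hg7, hg8, hg9, hg10, hg11, hg12, hg3]) <;> (try ring)
  have D4 : genFu k (g ^ 2 * b) (g ^ 2) 1 * (genFu k (g ^ 2 * b) (g ^ 2) 0 * genFu k (g ^ 2 * b) (g ^ 2) 2) = ((g ^ 2) ^ 2 : k) • (genFu k (g ^ 2 * b) (g ^ 2) 0 * (genFu k (g ^ 2 * b) (g ^ 2) 1 * genFu k (g ^ 2 * b) (g ^ 2) 2)) := by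
    rw [← mul_assoc, E1, smul_mul_assoc, mul_assoc]
  have D3 : genFu k (g ^ 2 * b) (g ^ 2) 2 * (genFu k (g ^ 2 * b) (g ^ 2) 1 * genFu k (g ^ 2 * b) (g ^ 2) 1) = genFu k (g ^ 2 * b) (g ^ 2) 0 * (genFu k (g ^ 2 * b) (g ^ 2) 0 * genFu k (g ^ 2 * b) (g ^ 2) 2) + (-g * b) • (genFu k (g ^ 2 * b) (g ^ 2) 0 * (genFu k (g ^ 2 * b) (g ^ 2) 1 * genFu k (g ^ 2 * b) (g ^ 2) 2))
      + (-b⁻¹) • (genFu k (g ^ 2 * b) (g ^ 2) 0 * (genFu k (g ^ 2 * b) (g ^ 2) 2 * genFu k (g ^ 2 * b) (g ^ 2) 0)) := by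
    rw [← mul_assoc, E2]; simp only [add_mul, smul_mul_assoc, mul_assoc]
    rw [E5, E2]; simp only [mul_add, mul_smul_comm, smul_add, smul_smul]
    rw [D4]; simp only [smul_smul]
    match_scalars <;> (try field_simp [hb, hg0, hb']) <;> ring_nf <;> (try simp only [hg2, hg4, hg5, hg6, hg7, hg8, hg9, hg10, hg11, hg12, hg3]) <;> (try ring)
  -- the forward algebra map
  have hf0 : (FreeAlgebra.lift k (fwdGen k b g)) (X k 0) = b • genFu k (g ^ 2 * b) (g ^ 2) 1 := by
    rw [FreeAlgebra.lift_ι_apply]; rfl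
  have hf1 : (FreeAlgebra.lift k (fwdGen k b g)) (X k 1) = (g * b⁻¹) • genFu k (g ^ 2 * b) (g ^ 2) 0 := by
    rw [FreeAlgebra.lift_ι_apply]; rfl
  have hf2 : (FreeAlgebra.lift k (fwdGen k b g)) (X k 2) = genFu k (g ^ 2 * b) (g ^ 2) 2 := by
    rw [FreeAlgebra.lift_ι_apply]; rfl
  have hrelF : ∀ ⦃x y : FreeAlgebra k (Fin 3)⦄, relF k b g x y →
      (FreeAlgebra.lift k (fwdGen k b g)) x = (FreeAlgebra.lift k (fwdGen k b g)) y := by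
    intro x y h
    cases h with
    | r1 =>
        simp only [map_mul, map_smul, hf0, hf1, hf2, smul_mul_assoc, mul_smul_comm, smul_smul,
          mul_assoc]
        rw [E1]
        match_scalars <;> (try field_simp [hb, hg0, hb']) <;> ring_nf <;> (try simp only [hg2, hg4, hg5, hg6, hg7, hg8, hg9, hg10, hg11, hg12, hg3]) <;> (try ring)
    | r2 =>
        simp only [map_mul, map_smul, map_add, map_neg, hf0, hf1, hf2, smul_mul_assoc,
          mul_smul_comm, smul_smul, mul_assoc, neg_smul]
        rw [E2]
        match_scalars <;> (try field_simp [hb, hg0, hb']) <;> ring_nf <;> (try simp only [hg2, hg4, hg5, hg6, hg7, hg8, hg9, hg10, hg11, hg12, hg3]) <;> (try ring)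
    | r3 =>
        simp only [map_mul, map_smul, map_add, hf0, hf1, hf2, smul_mul_assoc, mul_smul_comm,
          smul_smul, mul_assoc]
        rw [D2, D1]; simp only [smul_add, smul_smul]
        match_scalars <;> (try field_simp [hb, hg0, hb']) <;> ring_nf <;> (try simp only [hg2, hg4, hg5, hg6, hg7, hg8, hg9, hg10, hg11, hg12, hg3]) <;> (try ring)
    | r4 =>
        simp only [map_mul, map_smul, map_add, hf0, hf1, hf2, smul_mul_assoc, mul_smul_comm,
          smul_smul, mul_assoc]
        rw [D3, D4, E2]; simp only [mul_add, mul_smul_comm, smul_add, smul_smul]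
        match_scalars <;> (try field_simp [hb, hg0, hb']) <;> ring_nf <;> (try simp only [hg2, hg4, hg5, hg6, hg7, hg8, hg9, hg10, hg11, hg12, hg3]) <;> (try ring)
  -- relations in the source algebra
  have P1 : genF k b g 1 * genF k b g 0 = (g ^ 2 : k) • (genF k b g 0 * genF k b g 1) := by
    have h := RingQuot.mkAlgHom_rel k (@relF.r1 k _ b g)
    simp only [map_mul, map_smul] at h; exact h
  have P2 : genF k b g 2 * genF k b g 1 = (-(g * b⁻¹)) • (genF k b g 2 * genF k b g 0) + genF k b g 0 * genF k b g 2 + b • (genF k b g 1 * genF k b g 2) := by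
    have h := RingQuot.mkAlgHom_rel k (@relF.r2 k _ b g)
    simp only [map_mul, map_smul, map_add] at h; exact h
  have P3 : genF k b g 2 * (genF k b g 2 * genF k b g 0) = (g ^ 2 * b ^ 3) • (genF k b g 1 * (genF k b g 2 * genF k b g 2))
      + (-b) • (genF k b g 2 * (genF k b g 0 * genF k b g 2)) := by
    have h := RingQuot.mkAlgHom_rel k (@relF.r3 k _ b g)
    simp only [map_mul, map_smul, map_add, mul_assoc] at h; exact h
  have P4 : genF k b g 2 * (genF k b g 0 * genF k b g 0) = (g * b ^ 3) • (genF k b g 0 * (genF k b g 1 * genF k b g 2))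
      + (g ^ 2 * b ^ 2) • (genF k b g 1 * (genF k b g 2 * genF k b g 0)) := by
    have h := RingQuot.mkAlgHom_rel k (@relF.r4 k _ b g)
    simp only [map_mul, map_smul, map_add, mul_assoc] at h; exact h
  have G1 : genF k b g 2 * (genF k b g 1 * genF k b g 2) = (-(g * b⁻¹)) • (genF k b g 2 * (genF k b g 0 * genF k b g 2))
      + genF k b g 0 * (genF k b g 2 * genF k b g 2) + b • (genF k b g 1 * (genF k b g 2 * genF k b g 2)) := by
    rw [← mul_assoc, P2]; simp only [add_mul, smul_mul_assoc, mul_assoc]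
  have G2 : genF k b g 2 * (genF k b g 1 * genF k b g 0) = ((1 + g) * b ^ 2) • (genF k b g 0 * (genF k b g 1 * genF k b g 2))
      + genF k b g 0 * (genF k b g 2 * genF k b g 0) := by
    rw [← mul_assoc, P2]; simp only [add_mul, smul_mul_assoc, mul_assoc]
    rw [P4]; simp only [smul_add, smul_smul]
    match_scalars <;> (try field_simp [hb, hg0, hb']) <;> ring_nf <;> (try simp only [hg2, hg4, hg5, hg6, hg7, hg8, hg9, hg10, hg11, hg12, hg3]) <;> (try ring)
  have G3 : genF k b g 2 * (genF k b g 2 * genF k b g 1) = b • (genF k b g 0 * (genF k b g 2 * genF k b g 2)) + genF k b g 2 * (genF k b g 0 * genF k b g 2) := by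
    rw [P2]; simp only [mul_add, mul_smul_comm]
    rw [P3, G1]; simp only [smul_add, smul_smul]
    match_scalars <;> (try field_simp [hb, hg0, hb']) <;> ring_nf <;> (try simp only [hg2, hg4, hg5, hg6, hg7, hg8, hg9, hg10, hg11, hg12, hg3]) <;> (try ring)
  have G5 : genF k b g 2 * (genF k b g 0 * genF k b g 1) = (-b ^ 2) • (genF k b g 0 * (genF k b g 1 * genF k b g 2))
      + g • (genF k b g 0 * (genF k b g 2 * genF k b g 0)) := by
    have key : genF k b g 2 * (genF k b g 1 * genF k b g 0) = (g ^ 2 : k) • (genF k b g 2 * (genF k b g 0 * genF k b g 1)) := by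
      rw [P1, mul_smul_comm]
    have h3 : (g * g ^ 2 : k) = 1 := by linear_combination hg3
    calc genF k b g 2 * (genF k b g 0 * genF k b g 1)
        = (g * g ^ 2 : k) • (genF k b g 2 * (genF k b g 0 * genF k b g 1)) := by rw [h3, one_smul]
      _ = g • ((g ^ 2 : k) • (genF k b g 2 * (genF k b g 0 * genF k b g 1))) := by rw [mul_smul]
      _ = g • (genF k b g 2 * (genF k b g 1 * genF k b g 0)) := by rw [key]
      _ = _ := by
          rw [G2]; simp only [smul_add, smul_smul]
          match_scalars <;> (try field_simp [hb, hg0, hb']) <;> ring_nf <;> (try simp only [hg2, hg4, hg5, hg6, hg7, hg8, hg9, hg10, hg11, hg12, hg3]) <;> (try ring)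
  have G6 : genF k b g 1 * (genF k b g 0 * genF k b g 2) = (g ^ 2 : k) • (genF k b g 0 * (genF k b g 1 * genF k b g 2)) := by
    rw [← mul_assoc, P1, smul_mul_assoc, mul_assoc]
  have G4 : genF k b g 2 * (genF k b g 1 * genF k b g 1) = genF k b g 0 * (genF k b g 0 * genF k b g 2) + b⁻¹ • (genF k b g 0 * (genF k b g 2 * genF k b g 0))
      + b ^ 2 • (genF k b g 1 * (genF k b g 1 * genF k b g 2)) + (-g) • (genF k b g 1 * (genF k b g 2 * genF k b g 0)) := by
    rw [← mul_assoc, P2]; simp only [add_mul, smul_mul_assoc, mul_assoc]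
    rw [G5, P2]; simp only [mul_add, mul_smul_comm, smul_add, smul_smul]
    rw [G6]; simp only [smul_smul]
    match_scalars <;> (try field_simp [hb, hg0, hb']) <;> ring_nf <;> (try simp only [hg2, hg4, hg5, hg6, hg7, hg8, hg9, hg10, hg11, hg12, hg3]) <;> (try ring)
  -- the backward algebra map
  have hp0 : (FreeAlgebra.lift k (bwdGen k b g)) (X k 0) = (g ^ 2 * b) • genF k b g 1 := by
    rw [FreeAlgebra.lift_ι_apply]; rfl
  have hp1 : (FreeAlgebra.lift k (bwdGen k b g)) (X k 1) = b⁻¹ • genF k b g 0 := by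
    rw [FreeAlgebra.lift_ι_apply]; rfl
  have hp2 : (FreeAlgebra.lift k (bwdGen k b g)) (X k 2) = genF k b g 2 := by
    rw [FreeAlgebra.lift_ι_apply]; rfl
  have hrelG : ∀ ⦃x y : FreeAlgebra k (Fin 3)⦄, relFu k (g ^ 2 * b) (g ^ 2) x y →
      (FreeAlgebra.lift k (bwdGen k b g)) x = (FreeAlgebra.lift k (bwdGen k b g)) y := by
    intro x y h
    cases h with
    | r1 =>
        simp only [map_mul, map_smul, hp0, hp1, hp2, smul_mul_assoc, mul_smul_comm, smul_smul,
          mul_assoc]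
        rw [P1]
        match_scalars <;> (try field_simp [hb, hg0, hb']) <;> ring_nf <;> (try simp only [hg2, hg4, hg5, hg6, hg7, hg8, hg9, hg10, hg11, hg12, hg3]) <;> (try ring)
    | r2 =>
        simp only [map_mul, map_smul, map_add, map_neg, hp0, hp1, hp2, smul_mul_assoc,
          mul_smul_comm, smul_smul, mul_assoc, neg_smul]
        rw [P2]
        match_scalars <;> (try field_simp [hb, hg0, hb']) <;> ring_nf <;> (try simp only [hg2, hg4, hg5, hg6, hg7, hg8, hg9, hg10, hg11, hg12, hg3]) <;> (try ring)
    | r3 =>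
        simp only [map_mul, map_smul, map_add, hp0, hp1, hp2, smul_mul_assoc, mul_smul_comm,
          smul_smul, mul_assoc]
        rw [G3, G1]; simp only [mul_add, mul_smul_comm, smul_add, smul_smul]
        match_scalars <;> (try field_simp [hb, hg0, hb']) <;> ring_nf <;> (try simp only [hg2, hg4, hg5, hg6, hg7, hg8, hg9, hg10, hg11, hg12, hg3]) <;> (try ring)
    | r4 =>
        simp only [map_mul, map_smul, map_add, hp0, hp1, hp2, smul_mul_assoc, mul_smul_comm,
          smul_smul, mul_assoc]
        rw [G4, P2]; simp only [mul_add, mul_smul_comm, smul_add, smul_smul]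
        rw [G6]; simp only [smul_smul]
        match_scalars <;> (try field_simp [hb, hg0, hb']) <;> ring_nf <;> (try simp only [hg2, hg4, hg5, hg6, hg7, hg8, hg9, hg10, hg11, hg12, hg3]) <;> (try ring)
  have h1 : (RingQuot.liftAlgHom k ⟨FreeAlgebra.lift k (fwdGen k b g), hrelF⟩).comp
      (RingQuot.liftAlgHom k ⟨FreeAlgebra.lift k (bwdGen k b g), hrelG⟩)
      = AlgHom.id k (AlgFu k (g ^ 2 * b) (g ^ 2)) := by
    apply RingQuot.ringQuot_ext'
    apply FreeAlgebra.hom_ext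
    funext i
    fin_cases i <;>
      simp only [Function.comp_apply, AlgHom.coe_comp, AlgHom.coe_id, id_eq,
        RingQuot.liftAlgHom_mkAlgHom_apply, FreeAlgebra.lift_ι_apply, fwdGen, bwdGen,
        genF, genFu, X, map_smul, smul_smul]
    · rw [show g ^ 2 * b * (g * b⁻¹) = (1 : k) from by field_simp; exact hg3,
        one_smul]; rfl
    · rw [show b⁻¹ * b = (1 : k) from by field_simp, one_smul]; rfl
    · rfl
  have h2 : (RingQuot.liftAlgHom k ⟨FreeAlgebra.lift k (bwdGen k b g), hrelG⟩).comp
      (RingQuot.liftAlgHom k ⟨FreeAlgebra.lift k (fwdGen k b g), hrelF⟩)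
      = AlgHom.id k (AlgF k b g) := by
    apply RingQuot.ringQuot_ext'
    apply FreeAlgebra.hom_ext
    funext i
    fin_cases i <;>
      simp only [Function.comp_apply, AlgHom.coe_comp, AlgHom.coe_id, id_eq,
        RingQuot.liftAlgHom_mkAlgHom_apply, FreeAlgebra.lift_ι_apply, fwdGen, bwdGen,
        genF, genFu, X, map_smul, smul_smul]
    · rw [show b * b⁻¹ = (1 : k) from by field_simp, one_smul]; rfl
    · rw [show g * b⁻¹ * (g ^ 2 * b) = (1 : k) from by field_simp; exact hg3,
        one_smul]; rfl
    · rfl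
  refine ⟨AlgEquiv.ofAlgHom
      (RingQuot.liftAlgHom k ⟨FreeAlgebra.lift k (fwdGen k b g), hrelF⟩)
      (RingQuot.liftAlgHom k ⟨FreeAlgebra.lift k (bwdGen k b g), hrelG⟩) h1 h2, ?_, ?_, ?_⟩
  · show (RingQuot.liftAlgHom k ⟨FreeAlgebra.lift k (fwdGen k b g), hrelF⟩)
        (RingQuot.mkAlgHom k (relF k b g) (FreeAlgebra.ι k 0)) = _
    rw [RingQuot.liftAlgHom_mkAlgHom_apply, FreeAlgebra.lift_ι_apply]; rfl
  · show (RingQuot.liftAlgHom k ⟨FreeAlgebra.lift k (fwdGen k b g), hrelF⟩)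
        (RingQuot.mkAlgHom k (relF k b g) (FreeAlgebra.ι k 1)) = _
    rw [RingQuot.liftAlgHom_mkAlgHom_apply, FreeAlgebra.lift_ι_apply]; rfl
  · show (RingQuot.liftAlgHom k ⟨FreeAlgebra.lift k (fwdGen k b g), hrelF⟩)
        (RingQuot.mkAlgHom k (relF k b g) (FreeAlgebra.ι k 2)) = _
    rw [RingQuot.liftAlgHom_mkAlgHom_apply, FreeAlgebra.lift_ι_apply]; rfl
end
end

section
/- For b ∈ k^×, the element y := x_3x_1 - x_1x_3 is a normal element of ℋ(1) = k⟨x_1,x_2,x_3⟩/(x_2x_1 - x_1x_2 - x_1^2, x_3x_2 - 2x_1x_3 - x_2x_3, x_3^2x_1 + x_1x_3^2 - 2x_3x_1x_3, x_3x_1^2 + x_1^2x_3 - 2x_1x_3x_1). -/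
noncomputable section

open FreeAlgebra

variable (k : Type) [Field k]

/-- The defining relations of `ℋ(1)`. -/
inductive relH : FreeAlgebra k (Fin 3) → FreeAlgebra k (Fin 3) → Prop
  | r1 : relH (X k 1 * X k 0) (X k 0 * X k 1 + X k 0 * X k 0)
  | r2 : relH (X k 2 * X k 1) ((2 : k) • (X k 0 * X k 2) + X k 1 * X k 2)
  | r3 : relH (X k 2 * X k 2 * X k 0) (-(X k 0 * (X k 2 * X k 2)) + (2 : k) • (X k 2 * X k 0 * X k 2))
  | r4 : relH (X k 2 * (X k 0 * X k 0)) (-(X k 0 * X k 0 * X k 2) + (2 : k) • (X k 0 * X k 2 * X k 0))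

/-- The algebra `ℋ(1)`. -/
abbrev AlgH := RingQuot (relH k)

/-- The images of the generators in `ℋ(1)`. -/
abbrev genH (i : Fin 3) : AlgH k := RingQuot.mkAlgHom k (relH k) (X k i)

/-- the element `y = x₃x₁ - x₁x₃` is a normal element of `ℋ(1)`. -/
theorem normal_elem_in_H (b : k) (hb : b ≠ 0) :
    IsNormalElem (genH k 2 * genH k 0 - genH k 0 * genH k 2) := by
  have hA : genH k 1 * genH k 0 - (genH k 0 * genH k 1 + genH k 0 * genH k 0) = 0 := by
    have h := RingQuot.mkAlgHom_rel k (relH.r1 (k := k))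
    simp only [map_mul, map_add] at h
    rw [sub_eq_zero]; exact h
  have hB : genH k 2 * genH k 1 - (genH k 0 * genH k 2 + genH k 0 * genH k 2 + genH k 1 * genH k 2) = 0 := by
    have h := RingQuot.mkAlgHom_rel k (relH.r2 (k := k))
    simp only [map_mul, map_add, map_smul, two_smul] at h
    rw [sub_eq_zero]; exact h
  have hC : genH k 2 * genH k 2 * genH k 0 - (-(genH k 0 * (genH k 2 * genH k 2)) + (genH k 2 * genH k 0 * genH k 2 + genH k 2 * genH k 0 * genH k 2)) = 0 := by
    have h := RingQuot.mkAlgHom_rel k (relH.r3 (k := k))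
    simp only [map_mul, map_add, map_neg, map_smul, two_smul] at h
    rw [sub_eq_zero]; exact h
  have hD : genH k 2 * (genH k 0 * genH k 0) - (-(genH k 0 * genH k 0 * genH k 2) + (genH k 0 * genH k 2 * genH k 0 + genH k 0 * genH k 2 * genH k 0)) = 0 := by
    have h := RingQuot.mkAlgHom_rel k (relH.r4 (k := k))
    simp only [map_mul, map_add, map_neg, map_smul, two_smul] at h
    rw [sub_eq_zero]; exact h
  have key : ∀ p : FreeAlgebra k (Fin 3),
      (genH k 2 * genH k 0 - genH k 0 * genH k 2) * RingQuot.mkAlgHom k (relH k) p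
        = RingQuot.mkAlgHom k (relH k) p * (genH k 2 * genH k 0 - genH k 0 * genH k 2) := by
    intro p
    induction p using FreeAlgebra.induction with
    | grade0 r =>
        rw [AlgHom.commutes]
        rw [← Algebra.commutes]
    | grade1 i =>
        rw [← sub_eq_zero]
        fin_cases i
        · have expand : (genH k 2 * genH k 0 - genH k 0 * genH k 2) * genH k 0
              - genH k 0 * (genH k 2 * genH k 0 - genH k 0 * genH k 2)
            = genH k 2 * (genH k 0 * genH k 0) - (-(genH k 0 * genH k 0 * genH k 2) + (genH k 0 * genH k 2 * genH k 0 + genH k 0 * genH k 2 * genH k 0)) := by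
            noncomm_ring
            simp only [mul_add, add_mul, smul_add, mul_assoc, smul_mul_assoc, mul_smul_comm, smul_smul]
            abel
          show (genH k 2 * genH k 0 - genH k 0 * genH k 2) * genH k 0 - genH k 0 * (genH k 2 * genH k 0 - genH k 0 * genH k 2) = 0
          rw [expand, hD]
        · have expand : (genH k 2 * genH k 0 - genH k 0 * genH k 2) * genH k 1
              - genH k 1 * (genH k 2 * genH k 0 - genH k 0 * genH k 2)
            = -(genH k 2 * (genH k 1 * genH k 0 - (genH k 0 * genH k 1 + genH k 0 * genH k 0)))
              + (genH k 2 * genH k 1 - (genH k 0 * genH k 2 + genH k 0 * genH k 2 + genH k 1 * genH k 2)) * genH k 0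
              - genH k 0 * (genH k 2 * genH k 1 - (genH k 0 * genH k 2 + genH k 0 * genH k 2 + genH k 1 * genH k 2))
              + (genH k 1 * genH k 0 - (genH k 0 * genH k 1 + genH k 0 * genH k 0)) * genH k 2
              - (genH k 2 * (genH k 0 * genH k 0) - (-(genH k 0 * genH k 0 * genH k 2) + (genH k 0 * genH k 2 * genH k 0 + genH k 0 * genH k 2 * genH k 0))) := by
            noncomm_ring
            simp only [mul_add, add_mul, smul_add, mul_assoc, smul_mul_assoc, mul_smul_comm, smul_smul]
            abel
          show (genH k 2 * genH k 0 - genH k 0 * genH k 2) * genH k 1 - genH k 1 * (genH k 2 * genH k 0 - genH k 0 * genH k 2) = 0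
          rw [expand, hA, hB, hD]
          simp
        · have expand : (genH k 2 * genH k 0 - genH k 0 * genH k 2) * genH k 2
              - genH k 2 * (genH k 2 * genH k 0 - genH k 0 * genH k 2)
            = -(genH k 2 * genH k 2 * genH k 0 - (-(genH k 0 * (genH k 2 * genH k 2)) + (genH k 2 * genH k 0 * genH k 2 + genH k 2 * genH k 0 * genH k 2))) := by
            noncomm_ring
            simp only [mul_add, add_mul, smul_add, mul_assoc, smul_mul_assoc, mul_smul_comm, smul_smul]
            abel
          show (genH k 2 * genH k 0 - genH k 0 * genH k 2) * genH k 2 - genH k 2 * (genH k 2 * genH k 0 - genH k 0 * genH k 2) = 0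
          rw [expand, hC]
          simp
    | mul a c iha ihc =>
        rw [map_mul, ← mul_assoc, iha, mul_assoc, ihc, mul_assoc]
    | add a c iha ihc =>
        rw [map_add, mul_add, add_mul, iha, ihc]
  constructor <;> intro a <;>
    obtain ⟨p, rfl⟩ := RingQuot.mkAlgHom_surjective k (relH k) a
  · exact ⟨_, key p⟩
  · exact ⟨_, (key p).symm⟩
end
end

section
/- Let A be an algebra with an automorphism φ and let A^φ denote the graded twist of A by φ, with multiplication x ⋆ y = x·φ^m(y) for x ∈ A_m. For b ∈ k^×, the algebra 𝒜(b,q) of family 𝒜 is isomorphic to a graded twist of 𝒜(1,q): explicitly, if φ is the automorphism of 𝒜(1,q) with x_1 ↦ x_1, x_2 ↦ x_2, x_3 ↦ b^{-1}x_3, then the graded twist of 𝒜(1,q) by φ, after the change of variable replacing x_1 by b x_1, has exactly the defining relations of 𝒜(b,q). -/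
noncomputable section

open FreeAlgebra

variable (k : Type) [Field k]

namespace TwistAux
variable (q : k)

lemma R1 : genA k 1 q 1 * genA k 1 q 0 = q⁻¹ • (genA k 1 q 0 * genA k 1 q 1) := by
  simpa [map_mul, map_smul, neg_smul] using RingQuot.mkAlgHom_rel k (relA.r1 (k := k) (b := 1) (q := q))

lemma R2 : genA k 1 q 2 * genA k 1 q 1 =
    -((q ^ 2)⁻¹ • (genA k 1 q 2 * genA k 1 q 0)) + genA k 1 q 0 * genA k 1 q 2 +
      genA k 1 q 1 * genA k 1 q 2 := by
  simpa [map_mul, map_smul, map_add, neg_smul] using RingQuot.mkAlgHom_rel k (relA.r2 (k := k) (b := 1) (q := q))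

lemma R3 : genA k 1 q 2 * (genA k 1 q 2 * genA k 1 q 0) =
    -(q ^ 3 • (genA k 1 q 0 * (genA k 1 q 2 * genA k 1 q 2))) +
      (q ^ 2 + q) • (genA k 1 q 2 * (genA k 1 q 0 * genA k 1 q 2)) := by
  simpa [map_mul, map_smul, map_add, neg_smul, mul_assoc] using
    RingQuot.mkAlgHom_rel k (relA.r3 (k := k) (b := 1) (q := q))

lemma R4 : genA k 1 q 2 * (genA k 1 q 0 * genA k 1 q 0) =
    -(q ^ 3 • (genA k 1 q 0 * (genA k 1 q 0 * genA k 1 q 2))) +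
      (q ^ 2 + q) • (genA k 1 q 0 * (genA k 1 q 2 * genA k 1 q 0)) := by
  simpa [map_mul, map_smul, map_add, neg_smul, mul_assoc] using
    RingQuot.mkAlgHom_rel k (relA.r4 (k := k) (b := 1) (q := q))

/-- the free-algebra map sending `x₀ ↦ x₀`, `x₁ ↦ x₁`, `x₂ ↦ c • x₂`. -/
def F (c : k) : FreeAlgebra k (Fin 3) →ₐ[k] AlgA k 1 q :=
  FreeAlgebra.lift k ![genA k 1 q 0, genA k 1 q 1, c • genA k 1 q 2]

lemma F_rel (c : k) : ∀ ⦃u v⦄, relA k 1 q u v → F k q c u = F k q c v := by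
  intro u v h
  induction h with
  | r1 =>
      simp only [F, map_mul, map_smul, lift_ι_apply, Matrix.cons_val_zero, Matrix.cons_val_one,
        Matrix.head_cons, Matrix.cons_val_two, Matrix.tail_cons]
      exact R1 k q
  | r2 =>
      simp only [F, map_mul, map_smul, map_add, lift_ι_apply, Matrix.cons_val_zero,
        Matrix.cons_val_one, Matrix.head_cons, Matrix.cons_val_two, Matrix.tail_cons,
        smul_mul_assoc, mul_smul_comm, smul_smul, smul_add]
      rw [R2]
      module
  | r3 =>
      simp only [F, map_mul, map_smul, map_add, lift_ι_apply, Matrix.cons_val_zero,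
        Matrix.cons_val_one, Matrix.head_cons, Matrix.cons_val_two, Matrix.tail_cons,
        smul_mul_assoc, mul_smul_comm, smul_smul, smul_add, mul_assoc]
      rw [R3]
      module
  | r4 =>
      simp only [F, map_mul, map_smul, map_add, lift_ι_apply, Matrix.cons_val_zero,
        Matrix.cons_val_one, Matrix.head_cons, Matrix.cons_val_two, Matrix.tail_cons,
        smul_mul_assoc, mul_smul_comm, smul_smul, smul_add, mul_assoc]
      rw [R4]
      module

/-- the induced endomorphism of `𝒜(1,q)`. -/
def Φ (c : k) : AlgA k 1 q →ₐ[k] AlgA k 1 q :=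
  RingQuot.liftAlgHom k ⟨F k q c, F_rel k q c⟩

lemma Φ_gen (c : k) (i : Fin 3) :
    Φ k q c (genA k 1 q i) = ![genA k 1 q 0, genA k 1 q 1, c • genA k 1 q 2] i := by
  rw [Φ, genA, RingQuot.liftAlgHom_mkAlgHom_apply, F, lift_ι_apply]

lemma algHom_ext (g h : AlgA k 1 q →ₐ[k] AlgA k 1 q)
    (w : ∀ i, g (genA k 1 q i) = h (genA k 1 q i)) : g = h := by
  have : g.comp (RingQuot.mkAlgHom k (relA k 1 q)) =
      h.comp (RingQuot.mkAlgHom k (relA k 1 q)) := FreeAlgebra.hom_ext (funext fun i => w i)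
  rw [RingQuot.eq_liftAlgHom_comp_mkAlgHom k g, RingQuot.eq_liftAlgHom_comp_mkAlgHom k h]
  congr 1
  exact Subtype.ext this

end TwistAux

/-- `𝒜(b,q)` is a graded twist of `𝒜(1,q)`.  Explicitly: there is a graded
automorphism `φ` of `𝒜(1,q)` with `φ(x₁) = x₁`, `φ(x₂) = x₂`, `φ(x₃) = b⁻¹x₃`, and after the
change of variable `y₁ = b x₁`, `y₂ = x₂`, `y₃ = x₃`, the twisted products
`u ⋆ v = u φ(v)`, `u ⋆ v ⋆ w = u φ(v) φ²(w)` (for `u,v,w` of degree one) satisfy exactly the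
four defining relations of `𝒜(b,q)`. -/
theorem A_is_graded_twist (b q : k) (hq0 : q ≠ 0) (hq1 : q ≠ 1) (hb : b ≠ 0) :
    ∃ φ : AlgA k 1 q ≃ₐ[k] AlgA k 1 q,
      φ (genA k 1 q 0) = genA k 1 q 0 ∧
      φ (genA k 1 q 1) = genA k 1 q 1 ∧
      φ (genA k 1 q 2) = b⁻¹ • genA k 1 q 2 ∧
      -- notation for the twisted variables
      (∀ y₁ y₂ y₃ : AlgA k 1 q,
        y₁ = b • genA k 1 q 0 → y₂ = genA k 1 q 1 → y₃ = genA k 1 q 2 →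
        -- r1 of 𝒜(b,q):  y₂ ⋆ y₁ = q⁻¹ (y₁ ⋆ y₂)
        (y₂ * φ y₁ = q⁻¹ • (y₁ * φ y₂)) ∧
        -- r2 of 𝒜(b,q):  y₃ ⋆ y₂ = -(q²b)⁻¹ (y₃ ⋆ y₁) + y₁ ⋆ y₃ + b (y₂ ⋆ y₃)
        (y₃ * φ y₂ =
          -(q ^ 2 * b)⁻¹ • (y₃ * φ y₁) + y₁ * φ y₃ + b • (y₂ * φ y₃)) ∧
        -- r3 of 𝒜(b,q):  y₃ ⋆ y₃ ⋆ y₁ = -q³b² (y₁ ⋆ y₃ ⋆ y₃) + (q²+q)b (y₃ ⋆ y₁ ⋆ y₃)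
        (y₃ * φ y₃ * φ (φ y₁) =
          -(q ^ 3 * b ^ 2) • (y₁ * φ y₃ * φ (φ y₃)) +
            ((q ^ 2 + q) * b) • (y₃ * φ y₁ * φ (φ y₃))) ∧
        -- r4 of 𝒜(b,q):  y₃ ⋆ y₁ ⋆ y₁ = -q³b² (y₁ ⋆ y₁ ⋆ y₃) + (q²+q)b (y₁ ⋆ y₃ ⋆ y₁)
        (y₃ * φ y₁ * φ (φ y₁) =
          -(q ^ 3 * b ^ 2) • (y₁ * φ y₁ * φ (φ y₃)) +
            ((q ^ 2 + q) * b) • (y₁ * φ y₃ * φ (φ y₁)))) := by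
  classical
  set x0 := genA k 1 q 0
  set x1 := genA k 1 q 1
  set x2 := genA k 1 q 2
  have hbb : b * b⁻¹ = 1 := mul_inv_cancel₀ hb
  have hbb' : b⁻¹ * b = 1 := inv_mul_cancel₀ hb
  have comp1 : (TwistAux.Φ k q b⁻¹).comp (TwistAux.Φ k q b) = AlgHom.id k (AlgA k 1 q) := by
    apply TwistAux.algHom_ext
    intro i
    fin_cases i <;>
      simp [TwistAux.Φ_gen, map_smul, smul_smul, hbb, hbb']
  have comp2 : (TwistAux.Φ k q b).comp (TwistAux.Φ k q b⁻¹) = AlgHom.id k (AlgA k 1 q) := by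
    apply TwistAux.algHom_ext
    intro i
    fin_cases i <;>
      simp [TwistAux.Φ_gen, map_smul, smul_smul, hbb, hbb']
  refine ⟨AlgEquiv.ofAlgHom (TwistAux.Φ k q b⁻¹) (TwistAux.Φ k q b) comp1 comp2, ?_, ?_, ?_, ?_⟩
  · simpa using TwistAux.Φ_gen k q b⁻¹ 0
  · simpa using TwistAux.Φ_gen k q b⁻¹ 1
  · simpa using TwistAux.Φ_gen k q b⁻¹ 2
  · intro y1 y2 y3 h1 h2 h3
    subst h1 h2 h3
    have hφ0 : TwistAux.Φ k q b⁻¹ x0 = x0 := by simpa using TwistAux.Φ_gen k q b⁻¹ 0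
    have hφ1 : TwistAux.Φ k q b⁻¹ x1 = x1 := by simpa using TwistAux.Φ_gen k q b⁻¹ 1
    have hφ2 : TwistAux.Φ k q b⁻¹ x2 = b⁻¹ • x2 := by simpa using TwistAux.Φ_gen k q b⁻¹ 2
    simp only [AlgEquiv.ofAlgHom_apply, map_smul, hφ0, hφ1, hφ2]
    refine ⟨?_, ?_, ?_, ?_⟩
    · simp only [smul_mul_assoc, mul_smul_comm, smul_smul]
      rw [TwistAux.R1]
      module
    · simp only [smul_mul_assoc, mul_smul_comm, smul_smul, smul_add]
      rw [TwistAux.R2]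
      match_scalars <;> field_simp <;> ring
    · simp only [smul_mul_assoc, mul_smul_comm, smul_smul, smul_add, mul_assoc]
      rw [TwistAux.R3]
      match_scalars <;> field_simp <;> ring
    · simp only [smul_mul_assoc, mul_smul_comm, smul_smul, smul_add, mul_assoc]
      rw [TwistAux.R4]
      match_scalars <;> field_simp <;> ring
end
end
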